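/- arXiv:0708.1892 — 4 statements merged into one kernel-verified Lean document; each statement's English description precedes it below -/
import Mathlib

section
/- Fix n, j and k ≥ 0, and suppose that, F₀^∞-almost surely, ∫_{A_{n,j}} R_k(f) Π(df) > 0. Then, F₀^∞-almost surely, E(L^{(n)}_{k+1,j} | ℱ_k) = L^{(n)}_{k,j} · (1 − h²(f_{k,A_{n,j}}, f₀)/2), where ℱ_k is the σ-algebra generated by X_1, …, X_k and f_{k,A_{n,j}}(x) = ∫_{A_{n,j}} f(x) R_k(f) Π(df) / ∫_{A_{n,j}} R_k(f) Π(df) is the predictive density restricted to A_{n,j} (for k = 0 it is f_{0,A_{n,j}}(x) = ∫_{A_{n,j}} f(x) Π(df)/Π(A_{n,j})). -/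
open MeasureTheory ProbabilityTheory Filter
open scoped ENNReal

/-- The Hellinger metric between two densities w.r.t. the measure `lam`. -/
noncomputable def hellinger {X : Type*} [MeasurableSpace X] (lam : Measure X)
    (f g : X → ℝ) : ℝ :=
  Real.sqrt (∫ x, (Real.sqrt (f x) - Real.sqrt (g x)) ^ 2 ∂lam)

lemma integrable_of_integral_pos {α : Type*} [MeasurableSpace α] {μ : Measure α} {f : α → ℝ}
    (h : 0 < ∫ x, f x ∂μ) : Integrable f μ := by
  by_contra hc
  rw [integral_undef hc] at h
  exact lt_irrefl 0 h

lemma sqrt_le_one_add {t : ℝ} (ht : 0 ≤ t) : Real.sqrt t ≤ 1 + t := by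
  nlinarith [Real.sq_sqrt ht, Real.sqrt_nonneg t]

lemma sqrt_mul_sqrt_le {a b : ℝ} (ha : 0 ≤ a) (hb : 0 ≤ b) :
    Real.sqrt a * Real.sqrt b ≤ (a + b) / 2 := by
  nlinarith [Real.sq_sqrt ha, Real.sq_sqrt hb, sq_nonneg (Real.sqrt a - Real.sqrt b)]

/-- Freezing lemma: conditional expectation of `φ (Y, Z)` given `σ(Y)` when `Z ⟂ Y`. -/
lemma freezing {α β γ : Type*} {mα : MeasurableSpace α} {mβ : MeasurableSpace β}
    [MeasurableSpace γ] [StandardBorelSpace γ] [Nonempty γ]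
    (μ : Measure α) [IsProbabilityMeasure μ] {Y : α → β} {Z : α → γ}
    (hY : Measurable Y) (hZ : Measurable Z) (hind : IndepFun Y Z μ)
    {φ : β × γ → ℝ} (hφ : StronglyMeasurable φ)
    (hint : Integrable (fun a => φ (Y a, Z a)) μ) :
    μ[fun a => φ (Y a, Z a) | mβ.comap Y] =ᵐ[μ]
      fun a => ∫ z, φ (Y a, z) ∂(μ.map Z) := by
  haveI : IsProbabilityMeasure (μ.map Y) := Measure.isProbabilityMeasure_map hY.aemeasurable
  haveI : IsProbabilityMeasure (μ.map Z) := Measure.isProbabilityMeasure_map hZ.aemeasurable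
  have h1 := condExp_prod_ae_eq_integral_condDistrib hY hZ.aemeasurable hφ hint
  have hmap : μ.map (fun a => (Y a, Z a)) = (μ.map Y).prod (μ.map Z) :=
    (indepFun_iff_map_prod_eq_prod_map_map hY.aemeasurable hZ.aemeasurable).mp hind
  have h2 : ∀ᵐ x ∂(μ.map Y), Kernel.const β (μ.map Z) x = condDistrib Z Y μ x :=
    (condDistrib_ae_eq_of_measure_eq_compProd Y hZ.aemeasurable
      (by rw [Measure.compProd_const]; exact hmap)).mono fun x hx => hx.symm
  have h3 : ∀ᵐ a ∂μ, Kernel.const β (μ.map Z) (Y a) = condDistrib Z Y μ (Y a) :=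
    ae_of_ae_map hY.aemeasurable h2
  filter_upwards [h1, h3] with a ha hb
  rw [ha, ← hb, Kernel.const_apply]

lemma pointwise_step {X : Type*} [MeasurableSpace X] (lam : Measure X) [SigmaFinite lam]
    {F : Type*} [MeasurableSpace F] (ev : F → X → ℝ)
    (hev : Measurable (Function.uncurry ev))
    (hdens : ∀ f, (∀ x, 0 ≤ ev f x) ∧ ∫ x, ev f x ∂lam = 1)
    (Pr : Measure F) [IsProbabilityMeasure Pr]
    (f₀ : X → ℝ) (hf₀ : Measurable f₀ ∧ (∀ x, 0 ≤ f₀ x) ∧ ∫ x, f₀ x ∂lam = 1)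
    (A : Set F)
    (R : F → ℝ) (hR : Measurable R) (hR0 : ∀ f, 0 ≤ R f)
    (hD : 0 < ∫ f in A, R f ∂Pr) :
    ∫ z, Real.sqrt (∫ f in A, R f * (ev f z / f₀ z) ∂Pr)
        ∂(lam.withDensity (fun x => ENNReal.ofReal (f₀ x)))
      = Real.sqrt (∫ f in A, R f ∂Pr) *
        (1 - hellinger lam
            (fun x => (∫ f in A, ev f x * R f ∂Pr) / ∫ f in A, R f ∂Pr) f₀ ^ 2 / 2) := by
  set D := ∫ f in A, R f ∂Pr with hDdef
  have hRint : Integrable R (Pr.restrict A) := integrable_of_integral_pos hD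
  have hevm : ∀ g : F, Measurable (ev g) := fun g => hev.of_uncurry_left
  have hev_int : ∀ g : F, Integrable (ev g) lam := fun g =>
    integrable_of_integral_pos (by rw [(hdens g).2]; norm_num)
  have hf₀int : Integrable f₀ lam :=
    integrable_of_integral_pos (by rw [hf₀.2.2]; norm_num)
  set K : F × X → ℝ := fun q => ev q.1 q.2 * R q.1 with hKdef
  have hKmeas : Measurable K := hev.mul (hR.comp measurable_fst)
  have hK0 : ∀ q, 0 ≤ K q := fun q => mul_nonneg ((hdens q.1).1 q.2) (hR0 q.1)
  have hKint : Integrable K ((Pr.restrict A).prod lam) := by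
    refine ⟨hKmeas.aestronglyMeasurable, ?_⟩
    rw [hasFiniteIntegral_iff_ofReal (Eventually.of_forall hK0)]
    rw [lintegral_prod _ (hKmeas.ennreal_ofReal.aemeasurable)]
    have : ∀ g : F, ∫⁻ x, ENNReal.ofReal (K (g, x)) ∂lam = ENNReal.ofReal (R g) := by
      intro g
      have h1 : ∀ x, ENNReal.ofReal (K (g, x))
          = ENNReal.ofReal (ev g x) * ENNReal.ofReal (R g) := by
        intro x
        rw [hKdef]
        exact ENNReal.ofReal_mul ((hdens g).1 x)
      simp_rw [h1]
      rw [lintegral_mul_const _ (hevm g).ennreal_ofReal,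
        ← ofReal_integral_eq_lintegral_ofReal (hev_int g)
          (Eventually.of_forall ((hdens g).1)), (hdens g).2]
      simp
    simp_rw [this]
    rw [← ofReal_integral_eq_lintegral_ofReal hRint (Eventually.of_forall hR0)]
    exact ENNReal.ofReal_lt_top
  set N : X → ℝ := fun x => ∫ f in A, ev f x * R f ∂Pr with hNdef
  have hNint : Integrable N lam := hKint.integral_prod_right
  have hN0 : ∀ x, 0 ≤ N x := fun x =>
    integral_nonneg (fun f => mul_nonneg ((hdens f).1 x) (hR0 f))
  have hNsm : StronglyMeasurable N := hKmeas.stronglyMeasurable.integral_prod_left'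
  have hNval : ∫ x, N x ∂lam = D := by
    have hsw := integral_integral_swap (f := fun g x => ev g x * R g)
      (μ := Pr.restrict A) (ν := lam) hKint
    rw [hNdef, ← hsw]
    have : ∀ g : F, ∫ x, ev g x * R g ∂lam = R g := by
      intro g
      rw [integral_mul_const, (hdens g).2, one_mul]
    simp_rw [this]
    rfl
  set C := ∫ x, Real.sqrt (N x) * Real.sqrt (f₀ x) ∂lam with hCdef
  have hCint : Integrable (fun x => Real.sqrt (N x) * Real.sqrt (f₀ x)) lam := by
    refine Integrable.mono' ((hNint.add hf₀int).div_const 2)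
      ((Real.continuous_sqrt.comp_stronglyMeasurable hNsm).mul
        (Real.continuous_sqrt.comp_stronglyMeasurable hf₀.1.stronglyMeasurable)).aestronglyMeasurable
      (Eventually.of_forall fun x => ?_)
    rw [Real.norm_eq_abs, abs_of_nonneg (mul_nonneg (Real.sqrt_nonneg _) (Real.sqrt_nonneg _))]
    exact sqrt_mul_sqrt_le (hN0 x) (hf₀.2.1 x)
  -- LHS equals C
  have hLHS : ∫ z, Real.sqrt (∫ f in A, R f * (ev f z / f₀ z) ∂Pr)
      ∂(lam.withDensity (fun x => ENNReal.ofReal (f₀ x))) = C := by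
    have hwd : (lam.withDensity (fun x => ENNReal.ofReal (f₀ x)))
        = lam.withDensity (fun x => ((f₀ x).toNNReal : ℝ≥0∞)) := rfl
    rw [hwd, integral_withDensity_eq_integral_smul hf₀.1.real_toNNReal]
    refine integral_congr_ae (Eventually.of_forall fun z => ?_)
    have hc : ((f₀ z).toNNReal : ℝ) = f₀ z := Real.coe_toNNReal _ (hf₀.2.1 z)
    simp only [NNReal.smul_def, smul_eq_mul]
    rw [hc]
    rcases eq_or_lt_of_le (hf₀.2.1 z) with hz | hz
    · rw [← hz]
      simp [Real.sqrt_eq_zero']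
    · have hinner : (∫ f in A, R f * (ev f z / f₀ z) ∂Pr) = N z / f₀ z := by
        have : ∀ f : F, R f * (ev f z / f₀ z) = (ev f z * R f) * (f₀ z)⁻¹ := by
          intro f; field_simp
        simp_rw [this]
        rw [integral_mul_const, hNdef, div_eq_mul_inv]
      rw [hinner, Real.sqrt_div (hN0 z)]
      have hsz : Real.sqrt (f₀ z) ≠ 0 := by positivity
      have hself : Real.sqrt (f₀ z) * Real.sqrt (f₀ z) = f₀ z :=
        Real.mul_self_sqrt hz.le
      field_simp
      nlinarith [Real.sqrt_nonneg (N z)]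
  -- RHS equals C
  have hh2 : hellinger lam (fun x => N x / D) f₀ ^ 2
      = ∫ x, (Real.sqrt (N x / D) - Real.sqrt (f₀ x)) ^ 2 ∂lam := by
    rw [hellinger, Real.sq_sqrt]
    exact integral_nonneg fun x => sq_nonneg _
  have hexp : ∫ x, (Real.sqrt (N x / D) - Real.sqrt (f₀ x)) ^ 2 ∂lam
      = 2 - 2 * (C / Real.sqrt D) := by
    have hpt : ∀ x, (Real.sqrt (N x / D) - Real.sqrt (f₀ x)) ^ 2
        = N x / D - 2 * (Real.sqrt (N x) * Real.sqrt (f₀ x) / Real.sqrt D) + f₀ x := by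
      intro x
      have h1 : Real.sqrt (N x / D) ^ 2 = N x / D :=
        Real.sq_sqrt (div_nonneg (hN0 x) hD.le)
      have h2 : Real.sqrt (f₀ x) ^ 2 = f₀ x := Real.sq_sqrt (hf₀.2.1 x)
      have h3 : Real.sqrt (N x / D) = Real.sqrt (N x) / Real.sqrt D :=
        Real.sqrt_div (hN0 x) D
      rw [sub_sq, h1, h2, h3]
      ring
    simp_rw [hpt]
    have i1 : Integrable (fun x => N x / D) lam := hNint.div_const D
    have i2 : Integrable (fun x => 2 * (Real.sqrt (N x) * Real.sqrt (f₀ x) / Real.sqrt D))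
        lam := ((hCint.div_const (Real.sqrt D)).const_mul 2)
    have i12 : Integrable (fun x => N x / D - 2 * (Real.sqrt (N x) * Real.sqrt (f₀ x) / Real.sqrt D)) lam := i1.sub i2
    rw [integral_add i12 hf₀int, integral_sub i1 i2, integral_div, hNval,
      integral_const_mul, integral_div, ← hCdef, hf₀.2.2, div_self (ne_of_gt hD)]
    ring
  rw [hLHS, hh2, hexp]
  have hsD : Real.sqrt D ≠ 0 := by positivity
  field_simp
  ring

lemma integrable_sqrt_ratio {X : Type*} [MeasurableSpace X]
    {F : Type*} [MeasurableSpace F] {Ω : Type*} [MeasurableSpace Ω]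
    (lam : Measure X) [SigmaFinite lam] (ev : F → X → ℝ)
    (hev : Measurable (Function.uncurry ev))
    (hdens : ∀ f, (∀ x, 0 ≤ ev f x) ∧ ∫ x, ev f x ∂lam = 1)
    (Pr : Measure F) [IsProbabilityMeasure Pr]
    (f₀ : X → ℝ) (hf₀m : Measurable f₀) (hf₀0 : ∀ x, 0 ≤ f₀ x)
    (ν : Measure Ω) [IsProbabilityMeasure ν]
    (Xs : ℕ → Ω → X) (hXmeas : ∀ i, Measurable (Xs i))
    (hindep : iIndepFun Xs ν)
    (hlaw : ∀ i, Measure.map (Xs i) ν = lam.withDensity fun x => ENNReal.ofReal (f₀ x))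
    (A : Set F) (m : ℕ) :
    Integrable (fun ω => Real.sqrt
      (∫ f in A, ∏ i ∈ Finset.range m, ev f (Xs i ω) / f₀ (Xs i ω) ∂Pr)) ν := by
  have hev_int : ∀ g : F, Integrable (ev g) lam := fun g =>
    integrable_of_integral_pos (by rw [(hdens g).2]; norm_num)
  -- single-factor bound
  have hsingle : ∀ (g : F) (i : ℕ),
      ∫⁻ ω, ENNReal.ofReal (ev g (Xs i ω) / f₀ (Xs i ω)) ∂ν ≤ 1 := by
    intro g i
    have hm : Measurable fun x => ENNReal.ofReal (ev g x / f₀ x) :=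
      (hev.of_uncurry_left.div hf₀m).ennreal_ofReal
    rw [← lintegral_map hm (hXmeas i), hlaw i,
      lintegral_withDensity_eq_lintegral_mul lam hf₀m.ennreal_ofReal hm]
    have hb : ∀ x, ((fun x => ENNReal.ofReal (f₀ x)) *
        fun x => ENNReal.ofReal (ev g x / f₀ x)) x ≤ ENNReal.ofReal (ev g x) := by
      intro x
      simp only [Pi.mul_apply]
      rw [← ENNReal.ofReal_mul (hf₀0 x)]
      apply ENNReal.ofReal_le_ofReal
      rcases eq_or_ne (f₀ x) 0 with hz | hz
      · simp [hz, (hdens g).1 x]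
      · rw [mul_div_cancel₀ _ hz]
    calc ∫⁻ x, ((fun x => ENNReal.ofReal (f₀ x)) *
          fun x => ENNReal.ofReal (ev g x / f₀ x)) x ∂lam
        ≤ ∫⁻ x, ENNReal.ofReal (ev g x) ∂lam := lintegral_mono hb
      _ = 1 := by
          rw [← ofReal_integral_eq_lintegral_ofReal (hev_int g)
            (Eventually.of_forall ((hdens g).1)), (hdens g).2, ENNReal.ofReal_one]
  -- product bound
  have hone : ∀ g : F, ∫⁻ ω, ∏ i ∈ Finset.range m,
      ENNReal.ofReal (ev g (Xs i ω) / f₀ (Xs i ω)) ∂ν ≤ 1 := by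
    intro g
    set W : ℕ → Ω → ℝ≥0∞ := fun i ω => ENNReal.ofReal (ev g (Xs i ω) / f₀ (Xs i ω)) with hWdef
    have hWmeas : ∀ i, Measurable (W i) := fun i =>
      (hev.of_uncurry_left.div hf₀m).ennreal_ofReal.comp (hXmeas i)
    have hWindep : iIndepFun W ν :=
      hindep.comp (fun _ x => ENNReal.ofReal (ev g x / f₀ x))
        (fun _ => (hev.of_uncurry_left.div hf₀m).ennreal_ofReal)
    have key : ∀ n : ℕ, ∫⁻ ω, ∏ i ∈ Finset.range n, W i ω ∂ν ≤ 1 := by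
      intro n
      induction n with
      | zero => simp
      | succ n ih =>
        have hIF := hWindep.indepFun_prod_range_succ hWmeas n
        have hfeq : (∏ j ∈ Finset.range n, W j) = fun ω => ∏ j ∈ Finset.range n, W j ω := by
          funext ω; simp
        rw [hfeq] at hIF
        have hprod := lintegral_mul_eq_lintegral_mul_lintegral_of_indepFun
          (f := fun ω => ∏ j ∈ Finset.range n, W j ω) (g := W n)
          (Finset.measurable_prod _ fun i _ => hWmeas i) (hWmeas n) hIF
        calc ∫⁻ ω, ∏ i ∈ Finset.range (n + 1), W i ω ∂ν
            = ∫⁻ ω, ((fun ω => ∏ j ∈ Finset.range n, W j ω) * W n) ω ∂ν := by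
              apply lintegral_congr; intro ω
              simp [Finset.prod_range_succ]
          _ = (∫⁻ ω, ∏ j ∈ Finset.range n, W j ω ∂ν) * ∫⁻ ω, W n ω ∂ν := hprod
          _ ≤ 1 * 1 := mul_le_mul' ih (hsingle g n)
          _ = 1 := by simp
    exact key m
  -- joint integrability over ν × Pr.restrict A
  set H : Ω × F → ℝ := fun q => ∏ i ∈ Finset.range m, ev q.2 (Xs i q.1) / f₀ (Xs i q.1)
    with hHdef
  have hHmeas : Measurable H :=
    Finset.measurable_prod _ fun i _ =>
      (hev.comp (measurable_snd.prodMk ((hXmeas i).comp measurable_fst))).div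
        (hf₀m.comp ((hXmeas i).comp measurable_fst))
  have hH0 : ∀ q, 0 ≤ H q := fun q =>
    Finset.prod_nonneg fun i _ => div_nonneg ((hdens q.2).1 _) (hf₀0 _)
  have hHint : Integrable H (ν.prod (Pr.restrict A)) := by
    refine ⟨hHmeas.aestronglyMeasurable, ?_⟩
    rw [hasFiniteIntegral_iff_ofReal (Eventually.of_forall hH0),
      lintegral_prod_symm _ hHmeas.ennreal_ofReal.aemeasurable]
    have hbound : ∀ g : F, ∫⁻ ω, ENNReal.ofReal (H (ω, g)) ∂ν ≤ 1 := by
      intro g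
      have heq : ∀ ω, ENNReal.ofReal (H (ω, g))
          = ∏ i ∈ Finset.range m, ENNReal.ofReal (ev g (Xs i ω) / f₀ (Xs i ω)) := fun ω =>
        ENNReal.ofReal_prod_of_nonneg fun i _ => div_nonneg ((hdens g).1 _) (hf₀0 _)
      simp_rw [heq]
      exact hone g
    calc ∫⁻ g, ∫⁻ ω, ENNReal.ofReal (H (ω, g)) ∂ν ∂(Pr.restrict A)
        ≤ ∫⁻ _, 1 ∂(Pr.restrict A) := lintegral_mono hbound
      _ = Pr.restrict A Set.univ := lintegral_one
      _ ≤ Pr Set.univ := Measure.restrict_le_self _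
      _ < ⊤ := by simp
  have hg1 : Integrable (fun ω =>
      ∫ f in A, ∏ i ∈ Finset.range m, ev f (Xs i ω) / f₀ (Xs i ω) ∂Pr) ν :=
    hHint.integral_prod_left
  have hg10 : ∀ ω, 0 ≤ ∫ f in A, ∏ i ∈ Finset.range m, ev f (Xs i ω) / f₀ (Xs i ω) ∂Pr :=
    fun ω => integral_nonneg fun f =>
      Finset.prod_nonneg fun i _ => div_nonneg ((hdens f).1 _) (hf₀0 _)
  refine Integrable.mono' ((integrable_const 1).add hg1) ?_ (Eventually.of_forall fun ω => ?_)
  · exact (Real.continuous_sqrt.comp_stronglyMeasurable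
      hHmeas.stronglyMeasurable.integral_prod_right').aestronglyMeasurable
  · rw [Real.norm_eq_abs, abs_of_nonneg (Real.sqrt_nonneg _)]
    exact sqrt_le_one_add (hg10 ω)

/-- With `L_k = (∫_A R_k(f) Π(df))^{1/2}`, `R_k(f) = Π_{i<k} f(X_i)/f₀(X_i)`, and
`f_{k,A}(x) = ∫_A f(x) R_k(f) Π(df) / ∫_A R_k(f) Π(df)` the predictive density
restricted to `A`, if a.s. `∫_A R_k(f) Π(df) > 0` then a.s.
`E(L_{k+1} | ℱ_k) = L_k (1 − h²(f_{k,A}, f₀)/2)`, where `ℱ_k = σ(X_0, …, X_{k-1})`. -/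
theorem stmt3 {X : Type*} [MeasurableSpace X] [TopologicalSpace X] [PolishSpace X]
    [BorelSpace X] (lam : Measure X) [SigmaFinite lam]
    {F : Type*} [MeasurableSpace F] (ev : F → X → ℝ)
    (hev : Measurable (Function.uncurry ev))
    (hdens : ∀ f, (∀ x, 0 ≤ ev f x) ∧ ∫ x, ev f x ∂lam = 1)
    (Pr : Measure F) [IsProbabilityMeasure Pr]
    (f₀ : X → ℝ) (hf₀ : Measurable f₀ ∧ (∀ x, 0 ≤ f₀ x) ∧ ∫ x, f₀ x ∂lam = 1)
    {Ω : Type*} [MeasurableSpace Ω] (ν : Measure Ω) [IsProbabilityMeasure ν]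
    (Xs : ℕ → Ω → X) (hXmeas : ∀ i, Measurable (Xs i))
    (hindep : iIndepFun Xs ν)
    (hlaw : ∀ i, Measure.map (Xs i) ν = lam.withDensity (fun x => ENNReal.ofReal (f₀ x)))
    (A : Set F) (hAmeas : MeasurableSet A) (hApos : 0 < Pr A)
    (k : ℕ)
    (hpos : ∀ᵐ ω ∂ν,
      0 < ∫ f in A, (∏ i ∈ Finset.range k, ev f (Xs i ω) / f₀ (Xs i ω)) ∂Pr)
    -- `ℱ_k`, the σ-algebra generated by the first `k` observations
    (mk : MeasurableSpace Ω)
    (hmk : mk = ⨆ i ∈ Finset.range k, MeasurableSpace.comap (Xs i) inferInstance) :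
    ν[fun ω => Real.sqrt (∫ f in A,
        (∏ i ∈ Finset.range (k + 1), ev f (Xs i ω) / f₀ (Xs i ω)) ∂Pr) | mk]
      =ᵐ[ν] fun ω =>
        Real.sqrt (∫ f in A,
            (∏ i ∈ Finset.range k, ev f (Xs i ω) / f₀ (Xs i ω)) ∂Pr) *
          (1 - hellinger lam
              (fun x =>
                (∫ f in A,
                    ev f x * ∏ i ∈ Finset.range k, ev f (Xs i ω) / f₀ (Xs i ω) ∂Pr) /
                  ∫ f in A, (∏ i ∈ Finset.range k, ev f (Xs i ω) / f₀ (Xs i ω)) ∂Pr)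
              f₀ ^ 2 / 2) := by
  classical
  subst hmk
  haveI : Nonempty Ω := MeasureTheory.Measure.nonempty_of_neZero ν
  haveI : Nonempty X := ⟨Xs 0 (Classical.arbitrary Ω)⟩
  set Y : Ω → (↥(Finset.range k) → X) := fun ω i => Xs i ω with hYdef
  have hYmeas : Measurable Y := measurable_pi_lambda _ fun i => hXmeas i
  have hmk' : (⨆ i ∈ Finset.range k, MeasurableSpace.comap (Xs i) inferInstance)
      = MeasurableSpace.comap Y MeasurableSpace.pi := by
    have hpi : (MeasurableSpace.pi : MeasurableSpace (↥(Finset.range k) → X)) =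
        ⨆ i : ↥(Finset.range k),
          MeasurableSpace.comap (fun b : ↥(Finset.range k) → X => b i) inferInstance := rfl
    rw [hpi, MeasurableSpace.comap_iSup]
    simp_rw [MeasurableSpace.comap_comp]
    rw [iSup_subtype']
    rfl
  have hYX : IndepFun Y (Xs k) ν := by
    have h := hindep.indepFun_finset (Finset.range k) {k}
      (Finset.disjoint_singleton_right.mpr (by simp)) hXmeas
    have h2 := h.comp measurable_id
      (measurable_pi_apply (⟨k, Finset.mem_singleton_self k⟩ : ({k} : Finset ℕ)))
    exact h2
  set φ : ((↥(Finset.range k) → X) × X) → ℝ := fun p => Real.sqrt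
    (∫ f in A, (∏ i ∈ (Finset.range k).attach, ev f (p.1 i) / f₀ (p.1 i)) *
      (ev f p.2 / f₀ p.2) ∂Pr) with hφdef
  have hfun : (fun ω => Real.sqrt (∫ f in A,
      ∏ i ∈ Finset.range (k + 1), ev f (Xs i ω) / f₀ (Xs i ω) ∂Pr))
      = fun ω => φ (Y ω, Xs k ω) := by
    funext ω
    rw [hφdef]
    simp only [hYdef]
    congr 1
    refine integral_congr_ae (Eventually.of_forall fun f => ?_)
    have hpa : ∏ x ∈ (Finset.range k).attach, ev f (Xs ↑x ω) / f₀ (Xs ↑x ω)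
        = ∏ i ∈ Finset.range k, ev f (Xs i ω) / f₀ (Xs i ω) :=
      Finset.prod_attach (Finset.range k) (fun j => ev f (Xs j ω) / f₀ (Xs j ω))
    simp only [Finset.prod_range_succ, hpa]
  have hφm : StronglyMeasurable φ := by
    rw [hφdef]
    apply Continuous.comp_stronglyMeasurable Real.continuous_sqrt
    have hG : Measurable (fun q : F × ((↥(Finset.range k) → X) × X) =>
        (∏ i ∈ (Finset.range k).attach, ev q.1 (q.2.1 i) / f₀ (q.2.1 i)) *
          (ev q.1 q.2.2 / f₀ q.2.2)) := by
      apply Measurable.mul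
      · apply Finset.measurable_prod
        intro i _
        exact (hev.comp (measurable_fst.prodMk
            ((measurable_pi_apply i).comp (measurable_fst.comp measurable_snd)))).div
          (hf₀.1.comp ((measurable_pi_apply i).comp (measurable_fst.comp measurable_snd)))
      · exact (hev.comp (measurable_fst.prodMk (measurable_snd.comp measurable_snd))).div
          (hf₀.1.comp (measurable_snd.comp measurable_snd))
    exact hG.stronglyMeasurable.integral_prod_left'
  have hint : Integrable (fun ω => φ (Y ω, Xs k ω)) ν := by
    rw [← hfun]
    exact integrable_sqrt_ratio lam ev hev hdens Pr f₀ hf₀.1 hf₀.2.1 ν Xs hXmeas hindep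
      hlaw A (k + 1)
  have hfreeze := freezing ν hYmeas (hXmeas k) hYX hφm hint
  rw [hmk', hfun]
  refine hfreeze.trans ?_
  filter_upwards [hpos] with ω hω
  have hkey := pointwise_step lam ev hev hdens Pr f₀ hf₀ A
    (fun f => ∏ i ∈ Finset.range k, ev f (Xs i ω) / f₀ (Xs i ω))
    (Finset.measurable_prod _ fun i _ =>
      (hev.comp (measurable_id.prodMk measurable_const)).div measurable_const)
    (fun f => Finset.prod_nonneg fun i _ => div_nonneg ((hdens f).1 _) (hf₀.2.1 _))
    hω
  have hφz : ∀ z, φ (Y ω, z) = Real.sqrt (∫ f in A,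
      (∏ i ∈ Finset.range k, ev f (Xs i ω) / f₀ (Xs i ω)) * (ev f z / f₀ z) ∂Pr) := by
    intro z
    rw [hφdef]
    simp only [hYdef]
    congr 1
    refine integral_congr_ae (Eventually.of_forall fun f => ?_)
    have hpa : ∏ x ∈ (Finset.range k).attach, ev f (Xs ↑x ω) / f₀ (Xs ↑x ω)
        = ∏ i ∈ Finset.range k, ev f (Xs i ω) / f₀ (Xs i ω) :=
      Finset.prod_attach (Finset.range k) (fun j => ev f (Xs j ω) / f₀ (Xs j ω))
    simp only [hpa]
  rw [hlaw k]
  simp_rw [hφz]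
  beta_reduce at hkey
  exact hkey
end

section
/- Fix n and j, and suppose the measurable set A_{n,j} ⊆ 𝔽 satisfies: every f ∈ A_{n,j} has h(f, f₀) > ε_n, and A_{n,j} is contained in a Hellinger ball of radius δ_n < ε_n centered at some f_j ∈ A_{n,j}. Set γ_n = ε_n − δ_n. Then E(L^{(n)}_{n+1,j}) ≤ √(Π(A_{n,j})) · (1 − γ_n²/2)^{n+1}, where the expectation is under F₀^∞. -/
open MeasureTheory ProbabilityTheory Filter
open scoped ENNReal RealInnerProductSpace

namespace Stmt5Aux


variable {X : Type*} [MeasurableSpace X] {lam : Measure X}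

lemma dens_integrable {p : X → ℝ} (h0 : ∀ x, 0 ≤ p x)
    (h1 : ∫ x, p x ∂lam = 1) : Integrable p lam := by
  by_contra h
  rw [integral_undef h] at h1
  norm_num at h1

lemma dens_lintegral {p : X → ℝ} (h0 : ∀ x, 0 ≤ p x)
    (h1 : ∫ x, p x ∂lam = 1) : ∫⁻ x, ENNReal.ofReal (p x) ∂lam = 1 := by
  have := ofReal_integral_eq_lintegral_ofReal (dens_integrable h0 h1)
    (Filter.Eventually.of_forall h0)
  rw [h1] at this
  simpa using this.symm

lemma sqrtmul_integrable {p q : X → ℝ} (hp0 : ∀ x, 0 ≤ p x) (hq0 : ∀ x, 0 ≤ q x)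
    (hpi : Integrable p lam) (hqi : Integrable q lam)
    (hpm : Measurable p) (hqm : Measurable q) :
    Integrable (fun x => Real.sqrt (p x) * Real.sqrt (q x)) lam := by
  have hadd : Integrable (fun x => p x + q x) lam := hpi.add hqi
  refine Integrable.mono' hadd
    ((hpm.sqrt.mul hqm.sqrt).aestronglyMeasurable)
    (Filter.Eventually.of_forall fun x => ?_)
  have h1 : 0 ≤ Real.sqrt (p x) * Real.sqrt (q x) :=
    mul_nonneg (Real.sqrt_nonneg _) (Real.sqrt_nonneg _)
  rw [Real.norm_eq_abs, abs_of_nonneg h1]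
  nlinarith [Real.sq_sqrt (hp0 x), Real.sq_sqrt (hq0 x),
    sq_nonneg (Real.sqrt (p x) - Real.sqrt (q x)), hp0 x, hq0 x]

lemma integral_hell_sq {p q : X → ℝ} (hp0 : ∀ x, 0 ≤ p x) (hq0 : ∀ x, 0 ≤ q x)
    (hp1 : ∫ x, p x ∂lam = 1) (hq1 : ∫ x, q x ∂lam = 1)
    (hpm : Measurable p) (hqm : Measurable q) :
    ∫ x, (Real.sqrt (p x) - Real.sqrt (q x)) ^ 2 ∂lam
      = 2 - 2 * ∫ x, Real.sqrt (p x) * Real.sqrt (q x) ∂lam := by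
  have hpi := dens_integrable hp0 hp1
  have hqi := dens_integrable hq0 hq1
  have hsi := sqrtmul_integrable hp0 hq0 hpi hqi hpm hqm
  have hrw : (fun x => (Real.sqrt (p x) - Real.sqrt (q x)) ^ 2)
      = fun x => (p x + q x) - 2 * (Real.sqrt (p x) * Real.sqrt (q x)) := by
    funext x
    rw [sub_sq, Real.sq_sqrt (hp0 x), Real.sq_sqrt (hq0 x)]
    ring
  have hadd : Integrable (fun x => p x + q x) lam := hpi.add hqi
  rw [hrw, integral_sub hadd (hsi.const_mul 2), integral_add hpi hqi,
    MeasureTheory.integral_const_mul, hp1, hq1]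
  ring



variable {X : Type*} [MeasurableSpace X] {lam : Measure X}

lemma B_lt_of_lt_hell {p q : X → ℝ} {ε : ℝ}
    (hp0 : ∀ x, 0 ≤ p x) (hq0 : ∀ x, 0 ≤ q x)
    (hp1 : ∫ x, p x ∂lam = 1) (hq1 : ∫ x, q x ∂lam = 1)
    (hpm : Measurable p) (hqm : Measurable q) (hε : 0 ≤ ε)
    (h : ε < hellinger lam p q) :
    ∫ x, Real.sqrt (p x) * Real.sqrt (q x) ∂lam ≤ 1 - ε ^ 2 / 2 := by
  unfold hellinger at h
  rw [show (∫ x, (Real.sqrt (p x) - Real.sqrt (q x)) ^ 2 ∂lam)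
      = 2 - 2 * ∫ x, Real.sqrt (p x) * Real.sqrt (q x) ∂lam from
      integral_hell_sq hp0 hq0 hp1 hq1 hpm hqm] at h
  have := (Real.lt_sqrt hε).mp h
  linarith

lemma B_ge_of_hell_le {p q : X → ℝ} {δ : ℝ}
    (hp0 : ∀ x, 0 ≤ p x) (hq0 : ∀ x, 0 ≤ q x)
    (hp1 : ∫ x, p x ∂lam = 1) (hq1 : ∫ x, q x ∂lam = 1)
    (hpm : Measurable p) (hqm : Measurable q)
    (h : hellinger lam p q ≤ δ) :
    1 - δ ^ 2 / 2 ≤ ∫ x, Real.sqrt (p x) * Real.sqrt (q x) ∂lam := by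
  unfold hellinger at h
  have ht : 0 ≤ ∫ x, (Real.sqrt (p x) - Real.sqrt (q x)) ^ 2 ∂lam :=
    integral_nonneg fun x => sq_nonneg _
  have h2 : ∫ x, (Real.sqrt (p x) - Real.sqrt (q x)) ^ 2 ∂lam ≤ δ ^ 2 := by
    have := pow_le_pow_left₀ (Real.sqrt_nonneg _) h 2
    rwa [Real.sq_sqrt ht] at this
  rw [integral_hell_sq hp0 hq0 hp1 hq1 hpm hqm] at h2
  linarith

lemma hell_le_sqrt_two {p q : X → ℝ}
    (hp0 : ∀ x, 0 ≤ p x) (hq0 : ∀ x, 0 ≤ q x)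
    (hp1 : ∫ x, p x ∂lam = 1) (hq1 : ∫ x, q x ∂lam = 1)
    (hpm : Measurable p) (hqm : Measurable q) :
    hellinger lam p q ≤ Real.sqrt 2 := by
  unfold hellinger
  apply Real.sqrt_le_sqrt
  rw [integral_hell_sq hp0 hq0 hp1 hq1 hpm hqm]
  have : 0 ≤ ∫ x, Real.sqrt (p x) * Real.sqrt (q x) ∂lam :=
    integral_nonneg fun x => mul_nonneg (Real.sqrt_nonneg _) (Real.sqrt_nonneg _)
  linarith

lemma key_inner {E : Type*} [NormedAddCommGroup E] [InnerProductSpace ℝ E]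
    (x y z : E) (ε δ : ℝ) (hδ0 : 0 ≤ δ) (hδε : δ ≤ ε)
    (hx : ‖x‖ = 1) (hy : ‖y‖ = 1) (hz : ‖z‖ = 1)
    (hxy : 1 - δ ^ 2 / 2 ≤ ⟪x, y⟫) (hyz : ⟪y, z⟫ ≤ 1 - ε ^ 2 / 2) :
    ⟪x, z⟫ ≤ 1 - (ε - δ) ^ 2 / 2 := by
  have hxy2 : ‖x - y‖ ^ 2 ≤ δ ^ 2 := by
    rw [norm_sub_sq_real, hx, hy]; nlinarith
  have hxyn : ‖x - y‖ ≤ δ := by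
    have := Real.sqrt_le_sqrt hxy2
    rwa [Real.sqrt_sq (norm_nonneg _), Real.sqrt_sq hδ0] at this
  have hyz2 : ε ^ 2 ≤ ‖y - z‖ ^ 2 := by
    rw [norm_sub_sq_real, hy, hz]; nlinarith
  have hyzn : ε ≤ ‖y - z‖ := by
    have := Real.sqrt_le_sqrt hyz2
    rwa [Real.sqrt_sq (le_trans hδ0 hδε), Real.sqrt_sq (norm_nonneg _)] at this
  have htri : ‖y - z‖ ≤ ‖y - x‖ + ‖x - z‖ := norm_sub_le_norm_sub_add_norm_sub _ _ _
  rw [norm_sub_rev y x] at htri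
  have hxz : ε - δ ≤ ‖x - z‖ := by linarith
  have hxz2 : (ε - δ) ^ 2 ≤ ‖x - z‖ ^ 2 :=
    pow_le_pow_left₀ (by linarith) hxz 2
  rw [norm_sub_sq_real, hx, hz] at hxz2
  nlinarith

end Stmt5Aux

namespace Stmt5Aux

variable {X : Type*} [MeasurableSpace X] {lam : Measure X}

lemma memLp_sqrt {p : X → ℝ} (hm : Measurable p) (h0 : ∀ x, 0 ≤ p x)
    (h1 : ∫ x, p x ∂lam = 1) : MemLp (fun x => Real.sqrt (p x)) 2 lam := by
  refine (memLp_two_iff_integrable_sq hm.sqrt.aestronglyMeasurable).mpr ?_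
  have h : (fun x => Real.sqrt (p x) ^ 2) = p := funext fun x => Real.sq_sqrt (h0 x)
  rw [h]; exact dens_integrable h0 h1

lemma inner_toLp {φ ψ : X → ℝ} (hφ : MemLp φ 2 lam) (hψ : MemLp ψ 2 lam) :
    ⟪hφ.toLp φ, hψ.toLp ψ⟫ = ∫ y, φ y * ψ y ∂lam := by
  rw [L2.inner_def]
  apply integral_congr_ae
  filter_upwards [hφ.coeFn_toLp, hψ.coeFn_toLp] with y h1 h2
  rw [h1, h2]
  simp [RCLike.inner_apply, mul_comm]

lemma integrable_mul_L2 {φ ψ : X → ℝ} (hφ : MemLp φ 2 lam) (hψ : MemLp ψ 2 lam) :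
    Integrable (fun y => φ y * ψ y) lam := by
  have h := L2.integrable_inner (𝕜 := ℝ) (hφ.toLp φ) (hψ.toLp ψ)
  apply h.congr
  filter_upwards [hφ.coeFn_toLp, hψ.coeFn_toLp] with y h1 h2
  rw [h1, h2]
  simp [RCLike.inner_apply, mul_comm]

lemma norm_toLp_eq {φ : X → ℝ} (hφ : MemLp φ 2 lam) (c : ℝ)
    (h : ∫ y, φ y * φ y ∂lam = c) : ‖hφ.toLp φ‖ = Real.sqrt c := by
  have h2 := inner_toLp hφ hφ
  rw [h, real_inner_self_eq_norm_sq] at h2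
  rw [← h2, Real.sqrt_sq (norm_nonneg _)]

end Stmt5Aux

namespace Stmt5Aux

lemma step_lemma {X F : Type*} [MeasurableSpace X] [MeasurableSpace F]
    (lam : Measure X) [SigmaFinite lam] (Pr : Measure F) [IsFiniteMeasure Pr]
    (ev : F → X → ℝ) (hev : Measurable (Function.uncurry ev))
    (hdens : ∀ f, (∀ x, 0 ≤ ev f x) ∧ ∫ x, ev f x ∂lam = 1)
    (f₀ : X → ℝ) (hf₀m : Measurable f₀) (hf₀0 : ∀ x, 0 ≤ f₀ x)
    (hf₀1 : ∫ x, f₀ x ∂lam = 1)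
    (A : Set F) (fc : F) (ε δ : ℝ) (hδ : 0 < δ) (hδε : δ < ε)
    (ha : 0 ≤ 1 - δ ^ 2 / 2)
    (hfc0 : ∫ x, Real.sqrt (ev fc x) * Real.sqrt (f₀ x) ∂lam ≤ 1 - ε ^ 2 / 2)
    (hball : ∀ f ∈ A, 1 - δ ^ 2 / 2 ≤ ∫ x, Real.sqrt (ev f x) * Real.sqrt (ev fc x) ∂lam)
    (hc : 0 < 1 - (ε - δ) ^ 2 / 2)
    (w : F → ℝ≥0∞) (hw : Measurable w) :
    ∫⁻ y, (∫⁻ f in A, w f * ENNReal.ofReal (ev f y) ∂Pr) ^ ((1 : ℝ)/2)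
        * ENNReal.ofReal (f₀ y) ^ ((1 : ℝ)/2) ∂lam
      ≤ (∫⁻ f in A, w f ∂Pr) ^ ((1 : ℝ)/2)
        * ENNReal.ofReal (1 - (ε - δ) ^ 2 / 2) := by
  have hevf : ∀ f, Measurable (ev f) := fun f => hev.comp measurable_prodMk_left
  have hevi : ∀ f, Integrable (ev f) lam := fun f =>
    dens_integrable (hdens f).1 (hdens f).2
  set C := ∫⁻ f in A, w f ∂Pr with hCdef
  set g : X → ℝ≥0∞ := fun y => ∫⁻ f in A, w f * ENNReal.ofReal (ev f y) ∂Pr with hgdef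
  have hg_meas : Measurable g := by
    apply Measurable.lintegral_prod_right'
      (f := fun (p : X × F) => w p.2 * ENNReal.ofReal (ev p.2 p.1))
    exact (hw.comp measurable_snd).mul ((hev.comp measurable_swap).ennreal_ofReal)
  change ∫⁻ y, g y ^ ((1 : ℝ)/2) * ENNReal.ofReal (f₀ y) ^ ((1 : ℝ)/2) ∂lam
      ≤ C ^ ((1 : ℝ)/2) * ENNReal.ofReal (1 - (ε - δ) ^ 2 / 2)
  by_cases hC0 : C = 0
  · have hw0 : ∀ᵐ f ∂(Pr.restrict A), w f = 0 := (lintegral_eq_zero_iff hw).mp hC0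
    have hgz : ∀ y, g y = 0 := by
      intro y
      simp only [hgdef]
      calc ∫⁻ f in A, w f * ENNReal.ofReal (ev f y) ∂Pr
          = ∫⁻ _ in A, 0 ∂Pr :=
            lintegral_congr_ae (hw0.mono fun f hf => by simp [hf])
        _ = 0 := lintegral_zero
    simp only [hgz, ENNReal.zero_rpow_of_pos (by norm_num : (0:ℝ) < 1/2), zero_mul,
      lintegral_zero]
    exact zero_le
  by_cases hCtop : C = ⊤
  · have : C ^ ((1 : ℝ)/2) * ENNReal.ofReal (1 - (ε - δ) ^ 2 / 2) = ⊤ := by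
      rw [hCtop, ENNReal.top_rpow_of_pos (by norm_num : (0:ℝ) < 1/2), ENNReal.top_mul]
      simp only [ne_eq, ENNReal.ofReal_eq_zero, not_le]
      exact hc
    rw [this]
    exact le_top
  -- main case
  set C' := C.toReal with hC'def
  have hC'pos : 0 < C' := ENNReal.toReal_pos hC0 hCtop
  have hsC : 0 < Real.sqrt C' := Real.sqrt_pos.mpr hC'pos
  set sp : X → ℝ := fun y => Real.sqrt (ev fc y) with hspdef
  set s0 : X → ℝ := fun y => Real.sqrt (f₀ y) with hs0def
  have hsp_meas : Measurable sp := (hevf fc).sqrt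
  have hs0_meas : Measurable s0 := hf₀m.sqrt
  -- total mass of g
  have hgC : ∫⁻ y, g y ∂lam = C := by
    simp only [hgdef]
    rw [lintegral_lintegral_swap
      (((hw.comp measurable_snd).mul
        ((hev.comp measurable_swap).ennreal_ofReal)).aemeasurable)]
    simp only [hCdef]
    apply lintegral_congr fun f => ?_
    rw [lintegral_const_mul _ ((hevf f).ennreal_ofReal),
      dens_lintegral (hdens f).1 (hdens f).2, mul_one]
  have hgfin : ∀ᵐ y ∂lam, g y < ⊤ := ae_lt_top hg_meas (by rw [hgC]; exact hCtop)
  set u : X → ℝ := fun y => Real.sqrt ((g y).toReal) with hudef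
  have hu_meas : Measurable u := hg_meas.ennreal_toReal.sqrt
  have hu_nonneg : ∀ y, 0 ≤ u y := fun y => Real.sqrt_nonneg _
  have huae : ∀ᵐ y ∂lam, ENNReal.ofReal (u y) = g y ^ ((1 : ℝ)/2) := by
    filter_upwards [hgfin] with y hy
    show ENNReal.ofReal (Real.sqrt ((g y).toReal)) = g y ^ ((1 : ℝ)/2)
    rw [Real.sqrt_eq_rpow, ← ENNReal.ofReal_rpow_of_nonneg ENNReal.toReal_nonneg
      (by norm_num : (0:ℝ) ≤ 1/2), ENNReal.ofReal_toReal hy.ne]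
  have hu_int2 : Integrable (fun y => u y ^ 2) lam := by
    have h := integrable_toReal_of_lintegral_ne_top hg_meas.aemeasurable
      (by rw [hgC]; exact hCtop)
    have heq : (fun y => u y ^ 2) = fun y => (g y).toReal :=
      funext fun y => Real.sq_sqrt ENNReal.toReal_nonneg
    rw [heq]; exact h
  have hu_mem : MemLp u 2 lam :=
    (memLp_two_iff_integrable_sq hu_meas.aestronglyMeasurable).mpr hu_int2
  have hu2 : ∫ y, u y * u y ∂lam = C' := by
    have heq : (fun y => u y * u y) = fun y => (g y).toReal := by
      funext y
      rw [← pow_two]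
      exact Real.sq_sqrt ENNReal.toReal_nonneg
    rw [heq, integral_toReal hg_meas.aemeasurable hgfin, hgC]
  -- pointwise Cauchy-Schwarz
  have claim2 : ∀ y, (∫⁻ f in A, w f * ENNReal.ofReal (Real.sqrt (ev f y)) ∂Pr)
      ≤ C ^ ((1 : ℝ)/2) * g y ^ ((1 : ℝ)/2) := by
    intro y
    have hrw : ∀ f, w f * ENNReal.ofReal (Real.sqrt (ev f y))
        = (w f ^ ((1 : ℝ)/2)) * ((w f * ENNReal.ofReal (ev f y)) ^ ((1 : ℝ)/2)) := by
      intro f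
      have h1 : (w f * ENNReal.ofReal (ev f y)) ^ ((1 : ℝ)/2)
          = w f ^ ((1 : ℝ)/2) * ENNReal.ofReal (ev f y) ^ ((1 : ℝ)/2) :=
        ENNReal.mul_rpow_of_nonneg _ _ (by norm_num)
      have h2 : ENNReal.ofReal (ev f y) ^ ((1 : ℝ)/2)
          = ENNReal.ofReal (Real.sqrt (ev f y)) := by
        rw [Real.sqrt_eq_rpow]
        exact ENNReal.ofReal_rpow_of_nonneg ((hdens f).1 y) (by norm_num)
      have h3 : w f ^ ((1 : ℝ)/2) * w f ^ ((1 : ℝ)/2) = w f := by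
        rw [← ENNReal.rpow_add_of_nonneg _ _ (by norm_num) (by norm_num)]
        norm_num
      rw [h1, h2, ← mul_assoc, h3]
    have hxx : ∀ x : ℝ≥0∞, (x ^ ((1 : ℝ)/2)) ^ (2 : ℝ) = x := by
      intro x
      rw [← ENNReal.rpow_mul]
      norm_num
    calc ∫⁻ f in A, w f * ENNReal.ofReal (Real.sqrt (ev f y)) ∂Pr
        = ∫⁻ f in A, (w f ^ ((1 : ℝ)/2))
            * ((w f * ENNReal.ofReal (ev f y)) ^ ((1 : ℝ)/2)) ∂Pr := by
          apply lintegral_congr fun f => hrw f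
      _ ≤ (∫⁻ f in A, (w f ^ ((1 : ℝ)/2)) ^ (2:ℝ) ∂Pr) ^ (1/(2:ℝ))
          * (∫⁻ f in A, ((w f * ENNReal.ofReal (ev f y)) ^ ((1 : ℝ)/2)) ^ (2:ℝ) ∂Pr)
            ^ (1/(2:ℝ)) := by
          apply ENNReal.lintegral_mul_le_Lp_mul_Lq _ ⟨by norm_num, by norm_num, by norm_num⟩
          · exact (hw.pow measurable_const).aemeasurable
          · exact ((hw.mul ((hev.comp measurable_prodMk_right).ennreal_ofReal)).pow
              measurable_const).aemeasurable
      _ = C ^ ((1 : ℝ)/2) * g y ^ ((1 : ℝ)/2) := by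
          simp_rw [hxx, hCdef, hgdef]
  -- key chain
  have hBint : ∀ f, ∫⁻ y, ENNReal.ofReal (Real.sqrt (ev f y)) * ENNReal.ofReal (sp y) ∂lam
      = ENNReal.ofReal (∫ y, Real.sqrt (ev f y) * sp y ∂lam) := by
    intro f
    simp_rw [← ENNReal.ofReal_mul (Real.sqrt_nonneg _)]
    exact (ofReal_integral_eq_lintegral_ofReal
      (sqrtmul_integrable (hdens f).1 (hdens fc).1 (hevi f) (hevi fc) (hevf f) (hevf fc))
      (Filter.Eventually.of_forall fun y =>
        mul_nonneg (Real.sqrt_nonneg _) (Real.sqrt_nonneg _))).symm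
  have hJ_meas : Measurable fun f =>
      ∫⁻ y, ENNReal.ofReal (Real.sqrt (ev f y)) * ENNReal.ofReal (sp y) ∂lam := by
    apply Measurable.lintegral_prod_right'
      (f := fun (p : F × X) => ENNReal.ofReal (Real.sqrt (ev p.1 p.2))
        * ENNReal.ofReal (sp p.2))
    exact (hev.sqrt.ennreal_ofReal).mul ((hsp_meas.comp measurable_snd).ennreal_ofReal)
  have hJ : ∀ f ∈ A, ENNReal.ofReal (1 - δ ^ 2 / 2)
      ≤ ∫⁻ y, ENNReal.ofReal (Real.sqrt (ev f y)) * ENNReal.ofReal (sp y) ∂lam := by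
    intro f hf
    rw [hBint f]
    exact ENNReal.ofReal_le_ofReal (hball f hf)
  have hup_int : Integrable (fun y => u y * sp y) lam :=
    integrable_mul_L2 hu_mem (memLp_sqrt (hevf fc) (hdens fc).1 (hdens fc).2)
  have key : C * ENNReal.ofReal (1 - δ ^ 2 / 2)
      ≤ C ^ ((1 : ℝ)/2) * ENNReal.ofReal (∫ y, u y * sp y ∂lam) := by
    calc C * ENNReal.ofReal (1 - δ ^ 2 / 2)
        = ∫⁻ f in A, w f * ENNReal.ofReal (1 - δ ^ 2 / 2) ∂Pr := by
          rw [lintegral_mul_const' _ _ ENNReal.ofReal_ne_top, hCdef]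
      _ ≤ ∫⁻ f in A, w f * (∫⁻ y, ENNReal.ofReal (Real.sqrt (ev f y))
            * ENNReal.ofReal (sp y) ∂lam) ∂Pr := by
          apply setLIntegral_mono (hw.mul hJ_meas)
          exact fun f hf => mul_le_mul_right (hJ f hf) _
      _ = ∫⁻ f in A, ∫⁻ y, (w f * ENNReal.ofReal (Real.sqrt (ev f y)))
            * ENNReal.ofReal (sp y) ∂lam ∂Pr := by
          apply lintegral_congr fun f => ?_
          rw [← lintegral_const_mul _ (by exact (((hevf f).sqrt.ennreal_ofReal).mul
            (hsp_meas.ennreal_ofReal)))]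
          exact lintegral_congr fun y => (mul_assoc _ _ _).symm
      _ = ∫⁻ y, (∫⁻ f in A, w f * ENNReal.ofReal (Real.sqrt (ev f y)) ∂Pr)
            * ENNReal.ofReal (sp y) ∂lam := by
          rw [lintegral_lintegral_swap]
          · exact lintegral_congr fun y =>
              lintegral_mul_const' _ _ ENNReal.ofReal_ne_top
          · exact (((hw.comp measurable_fst).mul
                (hev.sqrt.ennreal_ofReal)).mul
                ((hsp_meas.comp measurable_snd).ennreal_ofReal)).aemeasurable
      _ ≤ ∫⁻ y, (C ^ ((1 : ℝ)/2) * g y ^ ((1 : ℝ)/2)) * ENNReal.ofReal (sp y) ∂lam :=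
          lintegral_mono fun y => mul_le_mul_left (claim2 y) _
      _ = C ^ ((1 : ℝ)/2) * ∫⁻ y, g y ^ ((1 : ℝ)/2) * ENNReal.ofReal (sp y) ∂lam := by
          simp_rw [mul_assoc]
          rw [lintegral_const_mul _ (by exact ((hg_meas.pow measurable_const).mul
            (hsp_meas.ennreal_ofReal)))]
      _ = C ^ ((1 : ℝ)/2) * ∫⁻ y, ENNReal.ofReal (u y) * ENNReal.ofReal (sp y) ∂lam := by
          congr 1
          apply lintegral_congr_ae
          filter_upwards [huae] with y hy
          rw [hy]
      _ = C ^ ((1 : ℝ)/2) * ENNReal.ofReal (∫ y, u y * sp y ∂lam) := by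
          congr 1
          simp_rw [← ENNReal.ofReal_mul (hu_nonneg _)]
          exact (ofReal_integral_eq_lintegral_ofReal hup_int
            (Filter.Eventually.of_forall fun y =>
              mul_nonneg (hu_nonneg y) (Real.sqrt_nonneg _))).symm
  have hCh : C ^ ((1 : ℝ)/2) = ENNReal.ofReal (Real.sqrt C') := by
    conv_lhs => rw [← ENNReal.ofReal_toReal hCtop]
    rw [ENNReal.ofReal_rpow_of_nonneg ENNReal.toReal_nonneg (by norm_num : (0:ℝ) ≤ 1/2),
      ← Real.sqrt_eq_rpow]
  have hInonneg : 0 ≤ ∫ y, u y * sp y ∂lam :=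
    integral_nonneg fun y => mul_nonneg (hu_nonneg y) (Real.sqrt_nonneg _)
  have hreal3 : Real.sqrt C' * (1 - δ ^ 2 / 2) ≤ ∫ y, u y * sp y ∂lam := by
    have h := key
    rw [hCh] at h
    nth_rewrite 1 [← ENNReal.ofReal_toReal hCtop] at h
    rw [← ENNReal.ofReal_mul ENNReal.toReal_nonneg,
      ← ENNReal.ofReal_mul (Real.sqrt_nonneg _)] at h
    have h2 := (ENNReal.ofReal_le_ofReal_iff
      (mul_nonneg (Real.sqrt_nonneg _) hInonneg)).mp h
    have hCC : C.toReal * (1 - δ ^ 2 / 2)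
        = Real.sqrt C' * (Real.sqrt C' * (1 - δ ^ 2 / 2)) := by
      rw [← mul_assoc, Real.mul_self_sqrt hC'pos.le]
    rw [hCC] at h2
    exact le_of_mul_le_mul_left h2 hsC
  have hsp_mem : MemLp sp 2 lam := memLp_sqrt (hevf fc) (hdens fc).1 (hdens fc).2
  have hs0_mem : MemLp s0 2 lam := memLp_sqrt hf₀m hf₀0 hf₀1
  have hnormx : ‖hu_mem.toLp u‖ = Real.sqrt C' := norm_toLp_eq hu_mem C' hu2
  have hnormy : ‖hsp_mem.toLp sp‖ = 1 := by
    have h := norm_toLp_eq hsp_mem 1 ?_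
    · rw [h, Real.sqrt_one]
    · calc ∫ y, sp y * sp y ∂lam = ∫ y, ev fc y ∂lam :=
            integral_congr_ae (Filter.Eventually.of_forall fun y =>
              Real.mul_self_sqrt ((hdens fc).1 y))
        _ = 1 := (hdens fc).2
  have hnormz : ‖hs0_mem.toLp s0‖ = 1 := by
    have h := norm_toLp_eq hs0_mem 1 ?_
    · rw [h, Real.sqrt_one]
    · calc ∫ y, s0 y * s0 y ∂lam = ∫ y, f₀ y ∂lam :=
            integral_congr_ae (Filter.Eventually.of_forall fun y =>
              Real.mul_self_sqrt (hf₀0 y))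
        _ = 1 := hf₀1
  set xs := (Real.sqrt C')⁻¹ • hu_mem.toLp u with hxs
  have hxs_norm : ‖xs‖ = 1 := by
    rw [hxs, norm_smul, hnormx, Real.norm_eq_abs,
      abs_of_nonneg (inv_nonneg.mpr (Real.sqrt_nonneg _)), inv_mul_cancel₀ hsC.ne']
  have hin_xy : 1 - δ ^ 2 / 2 ≤ ⟪xs, hsp_mem.toLp sp⟫ := by
    rw [hxs, real_inner_smul_left, inner_toLp hu_mem hsp_mem]
    calc (1 : ℝ) - δ ^ 2 / 2
        = (Real.sqrt C')⁻¹ * (Real.sqrt C' * (1 - δ ^ 2 / 2)) := by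
          field_simp
      _ ≤ (Real.sqrt C')⁻¹ * ∫ y, u y * sp y ∂lam :=
          mul_le_mul_of_nonneg_left hreal3 (inv_nonneg.mpr (Real.sqrt_nonneg _))
  have hin_yz : ⟪hsp_mem.toLp sp, hs0_mem.toLp s0⟫ ≤ 1 - ε ^ 2 / 2 := by
    rw [inner_toLp hsp_mem hs0_mem]
    exact hfc0
  have hkey := key_inner xs (hsp_mem.toLp sp) (hs0_mem.toLp s0) ε δ hδ.le hδε.le
    hxs_norm hnormy hnormz hin_xy hin_yz
  rw [hxs, real_inner_smul_left, inner_toLp hu_mem hs0_mem] at hkey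
  have hfinal_real : ∫ y, u y * s0 y ∂lam ≤ Real.sqrt C' * (1 - (ε - δ) ^ 2 / 2) :=
    (inv_mul_le_iff₀ hsC).mp hkey
  have hs0_int : Integrable (fun y => u y * s0 y) lam := integrable_mul_L2 hu_mem hs0_mem
  calc ∫⁻ y, g y ^ ((1 : ℝ)/2) * ENNReal.ofReal (f₀ y) ^ ((1 : ℝ)/2) ∂lam
      = ∫⁻ y, ENNReal.ofReal (u y) * ENNReal.ofReal (s0 y) ∂lam := by
        apply lintegral_congr_ae
        filter_upwards [huae] with y hy
        rw [← hy, ENNReal.ofReal_rpow_of_nonneg (hf₀0 y) (by norm_num : (0:ℝ) ≤ 1/2),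
          ← Real.sqrt_eq_rpow]
    _ = ENNReal.ofReal (∫ y, u y * s0 y ∂lam) := by
        simp_rw [← ENNReal.ofReal_mul (hu_nonneg _)]
        exact (ofReal_integral_eq_lintegral_ofReal hs0_int
          (Filter.Eventually.of_forall fun y =>
            mul_nonneg (hu_nonneg y) (Real.sqrt_nonneg _))).symm
    _ ≤ ENNReal.ofReal (Real.sqrt C' * (1 - (ε - δ) ^ 2 / 2)) :=
        ENNReal.ofReal_le_ofReal hfinal_real
    _ = C ^ ((1 : ℝ)/2) * ENNReal.ofReal (1 - (ε - δ) ^ 2 / 2) := by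
        rw [ENNReal.ofReal_mul (Real.sqrt_nonneg _), hCh]


end Stmt5Aux

/-- If every `f ∈ A` has `h(f,f₀) > ε_n` and `A` is contained in a Hellinger ball of
radius `δ_n < ε_n` centered at some `f_c ∈ A`, then with `γ_n = ε_n − δ_n`,
`E(L^{(n)}_{n+1}) ≤ √(Π(A)) (1 − γ_n²/2)^{n+1}`, where
`L^{(n)}_{k} = (∫_A R_k(f) Π(df))^{1/2}` and `R_k(f) = Π_{i<k} f(X_i)/f₀(X_i)`. -/
theorem stmt5 {X : Type*} [MeasurableSpace X] [TopologicalSpace X] [PolishSpace X]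
    [BorelSpace X] (lam : Measure X) [SigmaFinite lam]
    {F : Type*} [MeasurableSpace F] (ev : F → X → ℝ)
    (hev : Measurable (Function.uncurry ev))
    (hdens : ∀ f, (∀ x, 0 ≤ ev f x) ∧ ∫ x, ev f x ∂lam = 1)
    (Pr : Measure F) [IsProbabilityMeasure Pr]
    (f₀ : X → ℝ) (hf₀ : Measurable f₀ ∧ (∀ x, 0 ≤ f₀ x) ∧ ∫ x, f₀ x ∂lam = 1)
    {Ω : Type*} [MeasurableSpace Ω] (ν : Measure Ω) [IsProbabilityMeasure ν]
    (Xs : ℕ → Ω → X) (hXmeas : ∀ i, Measurable (Xs i))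
    (hindep : iIndepFun Xs ν)
    (hlaw : ∀ i, Measure.map (Xs i) ν = lam.withDensity (fun x => ENNReal.ofReal (f₀ x)))
    (n : ℕ) (εn δn : ℝ) (hδpos : 0 < δn) (hδε : δn < εn)
    (A : Set F) (hAmeas : MeasurableSet A)
    (hAsub : ∀ f ∈ A, εn < hellinger lam (ev f) f₀)
    (hAball : ∃ fc ∈ A, ∀ f ∈ A, hellinger lam (ev f) (ev fc) ≤ δn) :
    ∫⁻ ω, (∫⁻ f in A,
        ENNReal.ofReal (∏ i ∈ Finset.range (n + 1), ev f (Xs i ω) / f₀ (Xs i ω)) ∂Pr)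
          ^ ((1 : ℝ)/2) ∂ν
      ≤ (Pr A) ^ ((1 : ℝ)/2) *
          ENNReal.ofReal ((1 - (εn - δn) ^ 2 / 2) ^ (n + 1)) := by
  classical
  obtain ⟨fc, hfcA, hball⟩ := hAball
  obtain ⟨hf₀m, hf₀0, hf₀1⟩ := hf₀
  have hevf : ∀ f, Measurable (ev f) := fun f => hev.comp measurable_prodMk_left
  have hεpos : 0 < εn := lt_trans hδpos hδε
  have hfc0 : ∫ x, Real.sqrt (ev fc x) * Real.sqrt (f₀ x) ∂lam ≤ 1 - εn ^ 2 / 2 :=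
    Stmt5Aux.B_lt_of_lt_hell (hdens fc).1 hf₀0 (hdens fc).2 hf₀1 (hevf fc) hf₀m
      hεpos.le (hAsub fc hfcA)
  have hball' : ∀ f ∈ A, 1 - δn ^ 2 / 2
      ≤ ∫ x, Real.sqrt (ev f x) * Real.sqrt (ev fc x) ∂lam := fun f hf =>
    Stmt5Aux.B_ge_of_hell_le (hdens f).1 (hdens fc).1 (hdens f).2 (hdens fc).2
      (hevf f) (hevf fc) (hball f hf)
  have hε2 : εn < Real.sqrt 2 :=
    lt_of_lt_of_le (hAsub fc hfcA)
      (Stmt5Aux.hell_le_sqrt_two (hdens fc).1 hf₀0 (hdens fc).2 hf₀1 (hevf fc) hf₀m)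
  have hsq2 : Real.sqrt 2 ^ 2 = 2 := Real.sq_sqrt (by norm_num)
  have hc : 0 < 1 - (εn - δn) ^ 2 / 2 := by nlinarith [Real.sqrt_nonneg 2]
  have ha : 0 ≤ 1 - δn ^ 2 / 2 := by nlinarith [Real.sqrt_nonneg 2]
  set c : ℝ≥0∞ := ENNReal.ofReal (1 - (εn - δn) ^ 2 / 2) with hcdef
  set μ : Measure X := lam.withDensity (fun x => ENNReal.ofReal (f₀ x)) with hμdef
  have hμprob : IsProbabilityMeasure μ :=
    ⟨by rw [hμdef, withDensity_apply _ MeasurableSet.univ, Measure.restrict_univ]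
        exact Stmt5Aux.dens_lintegral hf₀0 hf₀1⟩
  have main : ∀ k : ℕ,
      ∫⁻ ω, (∫⁻ f in A,
          ENNReal.ofReal (∏ i : Fin k, ev f (Xs i ω) / f₀ (Xs i ω)) ∂Pr)
            ^ ((1 : ℝ)/2) ∂ν
        ≤ (Pr A) ^ ((1 : ℝ)/2) * c ^ k := by
    intro k
    induction k with
    | zero =>
      have h1 : ∀ ω : Ω, (∫⁻ f in A,
          ENNReal.ofReal (∏ i : Fin 0, ev f (Xs i ω) / f₀ (Xs i ω)) ∂Pr) ^ ((1 : ℝ)/2)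
          = (Pr A) ^ ((1 : ℝ)/2) := by
        intro ω
        congr 1
        simp [setLIntegral_one]
      rw [lintegral_congr h1, lintegral_const, measure_univ, mul_one, pow_zero, mul_one]
    | succ k ih =>
      set Vk : Ω → (Fin k → X) := fun ω i => Xs i ω with hVk
      have hVmeas : Measurable Vk := measurable_pi_lambda _ fun i => hXmeas i
      have hIF := hindep.indepFun_finset (Finset.range k) {k} (by simp) hXmeas
      have hφm : Measurable fun (v : ↥(Finset.range k) → X) (i : Fin k) =>
          v ⟨(i : ℕ), Finset.mem_range.mpr i.isLt⟩ :=
        measurable_pi_lambda _ fun i => measurable_pi_apply _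
      have hψm : Measurable fun (v : ↥({k} : Finset ℕ) → X) =>
          v ⟨k, Finset.mem_singleton_self k⟩ := measurable_pi_apply _
      have hIndep : IndepFun Vk (Xs k) ν := hIF.comp hφm hψm
      have hmap : ν.map (fun ω => (Vk ω, Xs k ω)) = (ν.map Vk).prod μ := by
        have h := (indepFun_iff_map_prod_eq_prod_map_map hVmeas.aemeasurable
          (hXmeas k).aemeasurable).mp hIndep
        rw [hlaw k] at h
        exact h
      haveI := hμprob
      haveI : IsProbabilityMeasure (ν.map Vk) :=
        Measure.isProbabilityMeasure_map hVmeas.aemeasurable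
      set Hf : (Fin k → X) × X → ℝ≥0∞ := fun p =>
        (∫⁻ f in A, ENNReal.ofReal ((∏ i : Fin k, ev f (p.1 i) / f₀ (p.1 i))
          * (ev f p.2 / f₀ p.2)) ∂Pr) ^ ((1 : ℝ)/2) with hHfdef
      set Gf : (Fin k → X) → ℝ≥0∞ := fun v =>
        (∫⁻ f in A, ENNReal.ofReal (∏ i : Fin k, ev f (v i) / f₀ (v i)) ∂Pr)
          ^ ((1 : ℝ)/2) with hGfdef
      have hHm : Measurable Hf := by
        apply Measurable.pow _ measurable_const
        apply Measurable.lintegral_prod_right'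
          (f := fun (q : ((Fin k → X) × X) × F) => ENNReal.ofReal
            ((∏ i : Fin k, ev q.2 (q.1.1 i) / f₀ (q.1.1 i)) * (ev q.2 q.1.2 / f₀ q.1.2)))
        apply Measurable.ennreal_ofReal
        apply Measurable.mul
        · apply Finset.univ.measurable_prod
          intro i _
          exact (hev.comp (measurable_snd.prodMk
            ((measurable_pi_apply i).comp (measurable_fst.comp measurable_fst)))).div
            (hf₀m.comp ((measurable_pi_apply i).comp (measurable_fst.comp measurable_fst)))
        · exact (hev.comp (measurable_snd.prodMk
            (measurable_snd.comp measurable_fst))).div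
            (hf₀m.comp (measurable_snd.comp measurable_fst))
      have hGm : Measurable Gf := by
        apply Measurable.pow _ measurable_const
        apply Measurable.lintegral_prod_right'
          (f := fun (q : (Fin k → X) × F) =>
            ENNReal.ofReal (∏ i : Fin k, ev q.2 (q.1 i) / f₀ (q.1 i)))
        apply Measurable.ennreal_ofReal
        apply Finset.univ.measurable_prod
        intro i _
        exact (hev.comp (measurable_snd.prodMk
          ((measurable_pi_apply i).comp measurable_fst))).div
          (hf₀m.comp ((measurable_pi_apply i).comp measurable_fst))
      have hstart : (∫⁻ ω, (∫⁻ f in A,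
          ENNReal.ofReal (∏ i : Fin (k+1), ev f (Xs i ω) / f₀ (Xs i ω)) ∂Pr)
            ^ ((1 : ℝ)/2) ∂ν)
          = ∫⁻ ω, Hf (Vk ω, Xs k ω) ∂ν := by
        apply lintegral_congr fun ω => ?_
        congr 1
        apply lintegral_congr fun f => ?_
        congr 1
        simp only [Fin.prod_univ_castSucc, Fin.coe_castSucc, Fin.val_last, hVk]
      have hstep : ∀ v : Fin k → X, ∫⁻ x, Hf (v, x) ∂μ ≤ Gf v * c := by
        intro v
        set w : F → ℝ≥0∞ := fun f =>
          ENNReal.ofReal (∏ i : Fin k, ev f (v i) / f₀ (v i)) with hwdef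
        have hP0 : ∀ f, 0 ≤ ∏ i : Fin k, ev f (v i) / f₀ (v i) := fun f =>
          Finset.prod_nonneg fun i _ => div_nonneg ((hdens f).1 _) (hf₀0 _)
        have hwm : Measurable w := by
          apply Measurable.ennreal_ofReal
          apply Finset.univ.measurable_prod
          intro i _
          exact (hev.comp measurable_prodMk_right).div measurable_const
        have hμrw : ∫⁻ x, Hf (v, x) ∂μ = ∫⁻ y,
            (∫⁻ f in A, w f * ENNReal.ofReal (ev f y) ∂Pr) ^ ((1 : ℝ)/2)
              * ENNReal.ofReal (f₀ y) ^ ((1 : ℝ)/2) ∂lam := by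
          have hHv : Measurable fun x => Hf (v, x) := hHm.comp measurable_prodMk_left
          show ∫⁻ x, Hf (v, x) ∂(lam.withDensity fun x => ENNReal.ofReal (f₀ x)) = _
          rw [lintegral_withDensity_eq_lintegral_mul lam hf₀m.ennreal_ofReal hHv]
          apply lintegral_congr fun y => ?_
          simp only [Pi.mul_apply]
          show ENNReal.ofReal (f₀ y) * (∫⁻ f in A,
              ENNReal.ofReal ((∏ i : Fin k, ev f (v i) / f₀ (v i))
                * (ev f y / f₀ y)) ∂Pr) ^ ((1 : ℝ)/2) = _
          by_cases hy : f₀ y = 0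
          · rw [hy]
            simp [ENNReal.zero_rpow_of_pos (by norm_num : (0:ℝ) < 1/2)]
          · have hy' : 0 < f₀ y := lt_of_le_of_ne (hf₀0 y) (Ne.symm hy)
            have hB0 : ENNReal.ofReal (f₀ y) ≠ 0 := by
              simp only [ne_eq, ENNReal.ofReal_eq_zero, not_le]
              exact hy'
            have hinner : ∫⁻ f in A, ENNReal.ofReal
                ((∏ i : Fin k, ev f (v i) / f₀ (v i)) * (ev f y / f₀ y)) ∂Pr
                = (∫⁻ f in A, w f * ENNReal.ofReal (ev f y) ∂Pr)
                  * (ENNReal.ofReal (f₀ y))⁻¹ := by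
              rw [← lintegral_mul_const' ((ENNReal.ofReal (f₀ y))⁻¹) _
                (ENNReal.inv_ne_top.mpr hB0)]
              apply lintegral_congr fun f => ?_
              rw [ENNReal.ofReal_mul (hP0 f), ENNReal.ofReal_div_of_pos hy',
                div_eq_mul_inv, mul_assoc]
            rw [hinner, ENNReal.mul_rpow_of_nonneg _ _ (by norm_num : (0:ℝ) ≤ 1/2),
              ENNReal.inv_rpow]
            have hsplit : ENNReal.ofReal (f₀ y)
                = ENNReal.ofReal (f₀ y) ^ ((1:ℝ)/2) * ENNReal.ofReal (f₀ y) ^ ((1:ℝ)/2) := by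
              rw [← ENNReal.rpow_add_of_nonneg _ _ (by norm_num : (0:ℝ) ≤ 1/2)
                (by norm_num : (0:ℝ) ≤ 1/2)]
              norm_num
            have hs0 : ENNReal.ofReal (f₀ y) ^ ((1:ℝ)/2) ≠ 0 := by
              rw [ENNReal.ofReal_rpow_of_nonneg (hf₀0 y) (by norm_num : (0:ℝ) ≤ 1/2)]
              simp only [ne_eq, ENNReal.ofReal_eq_zero, not_le]
              positivity
            have hstop : ENNReal.ofReal (f₀ y) ^ ((1:ℝ)/2) ≠ ⊤ := by
              rw [ENNReal.ofReal_rpow_of_nonneg (hf₀0 y) (by norm_num : (0:ℝ) ≤ 1/2)]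
              exact ENNReal.ofReal_ne_top
            calc ENNReal.ofReal (f₀ y) * ((∫⁻ f in A, w f * ENNReal.ofReal (ev f y) ∂Pr)
                  ^ ((1:ℝ)/2) * ((ENNReal.ofReal (f₀ y)) ^ ((1:ℝ)/2))⁻¹)
                = (∫⁻ f in A, w f * ENNReal.ofReal (ev f y) ∂Pr) ^ ((1:ℝ)/2)
                  * (ENNReal.ofReal (f₀ y) * ((ENNReal.ofReal (f₀ y)) ^ ((1:ℝ)/2))⁻¹) := by
                  ring
              _ = (∫⁻ f in A, w f * ENNReal.ofReal (ev f y) ∂Pr) ^ ((1:ℝ)/2)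
                  * ENNReal.ofReal (f₀ y) ^ ((1:ℝ)/2) := by
                  congr 1
                  nth_rewrite 1 [hsplit]
                  rw [mul_assoc, ENNReal.mul_inv_cancel hs0 hstop, mul_one]
        rw [hμrw]
        exact Stmt5Aux.step_lemma lam Pr ev hev hdens f₀ hf₀m hf₀0 hf₀1 A fc εn δn
          hδpos hδε ha hfc0 hball' hc w hwm
      rw [hstart]
      have hcne : c ≠ ⊤ := by rw [hcdef]; exact ENNReal.ofReal_ne_top
      calc ∫⁻ ω, Hf (Vk ω, Xs k ω) ∂ν
          = ∫⁻ p, Hf p ∂(ν.map fun ω => (Vk ω, Xs k ω)) :=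
            (lintegral_map hHm (hVmeas.prodMk (hXmeas k))).symm
        _ = ∫⁻ v, ∫⁻ x, Hf (v, x) ∂μ ∂(ν.map Vk) := by
            rw [hmap]
            exact lintegral_prod _ hHm.aemeasurable
        _ ≤ ∫⁻ v, Gf v * c ∂(ν.map Vk) := lintegral_mono hstep
        _ = (∫⁻ v, Gf v ∂(ν.map Vk)) * c := lintegral_mul_const' c _ hcne
        _ = (∫⁻ ω, Gf (Vk ω) ∂ν) * c := by rw [lintegral_map hGm hVmeas]
        _ ≤ ((Pr A) ^ ((1 : ℝ)/2) * c ^ k) * c := mul_le_mul_left ih c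
        _ = (Pr A) ^ ((1 : ℝ)/2) * c ^ (k + 1) := by rw [pow_succ, mul_assoc]
  -- conclude
  have hmain := main (n + 1)
  have hL : ∫⁻ ω, (∫⁻ f in A,
        ENNReal.ofReal (∏ i ∈ Finset.range (n + 1), ev f (Xs i ω) / f₀ (Xs i ω)) ∂Pr)
          ^ ((1 : ℝ)/2) ∂ν
      = ∫⁻ ω, (∫⁻ f in A,
        ENNReal.ofReal (∏ i : Fin (n + 1), ev f (Xs i ω) / f₀ (Xs i ω)) ∂Pr)
          ^ ((1 : ℝ)/2) ∂ν := by
    apply lintegral_congr fun ω => ?_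
    congr 1
    apply lintegral_congr fun f => ?_
    congr 1
    exact (Fin.prod_univ_eq_prod_range (fun i => ev f (Xs i ω) / f₀ (Xs i ω)) (n + 1)).symm
  rw [hL, show ENNReal.ofReal ((1 - (εn - δn) ^ 2 / 2) ^ (n + 1)) = c ^ (n + 1) by
    rw [hcdef, ← ENNReal.ofReal_pow hc.le]]
  exact hmain
end

section
/- Suppose each set A_{n,j} of the cover of A_{ε_n} is contained in a Hellinger ball of radius δ_n < ε_n centered at some f_j ∈ A_{n,j}, and set γ_n = ε_n − δ_n. Then for any η_n > 0, F₀^∞( Σ_{j≥1} L^{(n)}_{n,j} > exp(−n η_n) ) ≤ exp( −n( −log(1 − γ_n²/2) − η_n ) ) · K_{ε_n}. -/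
open MeasureTheory ProbabilityTheory Filter
open scoped ENNReal

namespace Stmt6Aux

variable {X : Type*} [MeasurableSpace X] {lam : Measure X}

/-- Density predicate. -/
structure IsDens (lam : Measure X) (f : X → ℝ) : Prop where
  meas : Measurable f
  nonneg : ∀ x, 0 ≤ f x
  int_one : ∫ x, f x ∂lam = 1

lemma IsDens.integrable {f : X → ℝ} (hf : IsDens lam f) : Integrable f lam := by
  by_contra h
  have h1 := hf.int_one
  rw [integral_undef h] at h1
  exact one_ne_zero h1.symm

lemma IsDens.add_integrable {f g : X → ℝ} (hf : IsDens lam f) (hg : IsDens lam g) :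
    Integrable (fun x => f x + g x) lam := hf.integrable.add hg.integrable

lemma IsDens.lintegral_one {f : X → ℝ} (hf : IsDens lam f) :
    ∫⁻ x, ENNReal.ofReal (f x) ∂lam = 1 := by
  rw [← ofReal_integral_eq_lintegral_ofReal hf.integrable (Filter.Eventually.of_forall hf.nonneg),
    hf.int_one, ENNReal.ofReal_one]

/-- Hellinger affinity. -/
noncomputable def aff (lam : Measure X) (f g : X → ℝ) : ℝ :=
  ∫ x, Real.sqrt (f x * g x) ∂lam

lemma sqrt_mul_le_add {a b : ℝ} (ha : 0 ≤ a) (hb : 0 ≤ b) :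
    Real.sqrt (a * b) ≤ (a + b) / 2 := by
  rw [Real.sqrt_mul ha]
  nlinarith [Real.sq_sqrt ha, Real.sq_sqrt hb, sq_nonneg (Real.sqrt a - Real.sqrt b),
    Real.sqrt_nonneg a, Real.sqrt_nonneg b]

lemma IsDens.aff_integrable {f g : X → ℝ} (hf : IsDens lam f) (hg : IsDens lam g) :
    Integrable (fun x => Real.sqrt (f x * g x)) lam := by
  refine Integrable.mono ((hf.add_integrable hg).div_const 2)
    ((hf.meas.mul hg.meas).sqrt.aestronglyMeasurable) (Filter.Eventually.of_forall fun x => ?_)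
  have h5 : (0:ℝ) ≤ f x + g x := add_nonneg (hf.nonneg x) (hg.nonneg x)
  rw [Real.norm_eq_abs, Real.norm_eq_abs, abs_of_nonneg (Real.sqrt_nonneg _),
    abs_of_nonneg (by positivity : (0:ℝ) ≤ (f x + g x)/2)]
  exact sqrt_mul_le_add (hf.nonneg x) (hg.nonneg x)

lemma IsDens.sq_sub_integrable {f g : X → ℝ} (hf : IsDens lam f) (hg : IsDens lam g) :
    Integrable (fun x => (Real.sqrt (f x) - Real.sqrt (g x)) ^ 2) lam := by
  have hm : Measurable fun x => (Real.sqrt (f x) - Real.sqrt (g x)) ^ 2 :=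
    (hf.meas.sqrt.sub hg.meas.sqrt).pow_const 2
  refine Integrable.mono (hf.add_integrable hg) hm.aestronglyMeasurable
    (Filter.Eventually.of_forall fun x => ?_)
  have h1 := Real.sq_sqrt (hf.nonneg x)
  have h2 := Real.sq_sqrt (hg.nonneg x)
  have h3 := Real.sqrt_nonneg (f x)
  have h4 := Real.sqrt_nonneg (g x)
  have h5 : (0:ℝ) ≤ f x + g x := add_nonneg (hf.nonneg x) (hg.nonneg x)
  rw [Real.norm_eq_abs, Real.norm_eq_abs, abs_of_nonneg (sq_nonneg _), abs_of_nonneg h5]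
  nlinarith [mul_nonneg h3 h4]

lemma IsDens.integral_sq_sub {f g : X → ℝ} (hf : IsDens lam f) (hg : IsDens lam g) :
    ∫ x, (Real.sqrt (f x) - Real.sqrt (g x)) ^ 2 ∂lam = 2 - 2 * aff lam f g := by
  have hpt : ∀ x, (Real.sqrt (f x) - Real.sqrt (g x)) ^ 2
      = f x + g x - 2 * Real.sqrt (f x * g x) := by
    intro x
    have h1 := Real.sq_sqrt (hf.nonneg x)
    have h2 := Real.sq_sqrt (hg.nonneg x)
    rw [Real.sqrt_mul (hf.nonneg x)]
    nlinarith []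
  simp_rw [hpt]
  rw [integral_sub (hf.add_integrable hg) ((hf.aff_integrable hg).const_mul 2),
    integral_add hf.integrable hg.integrable, integral_const_mul, hf.int_one, hg.int_one, aff]
  ring

lemma IsDens.hellinger_sq {f g : X → ℝ} (hf : IsDens lam f) (hg : IsDens lam g) :
    hellinger lam f g ^ 2 = 2 - 2 * aff lam f g := by
  rw [hellinger, Real.sq_sqrt (integral_nonneg fun x => sq_nonneg _), hf.integral_sq_sub hg]

lemma hellinger_nonneg (f g : X → ℝ) : 0 ≤ hellinger lam f g := Real.sqrt_nonneg _

lemma IsDens.aff_eq {f g : X → ℝ} (hf : IsDens lam f) (hg : IsDens lam g) :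
    aff lam f g = 1 - hellinger lam f g ^ 2 / 2 := by
  have := hf.hellinger_sq hg; linarith

lemma IsDens.aff_nonneg {f g : X → ℝ} (hf : IsDens lam f) (hg : IsDens lam g) :
    0 ≤ aff lam f g := integral_nonneg fun x => Real.sqrt_nonneg _

lemma IsDens.hellinger_sq_le_two {f g : X → ℝ} (hf : IsDens lam f) (hg : IsDens lam g) :
    hellinger lam f g ^ 2 ≤ 2 := by
  have h1 := hf.hellinger_sq hg
  have h2 := hf.aff_nonneg hg
  linarith

end Stmt6Aux

namespace Stmt6Aux
variable {X : Type*} [MeasurableSpace X] {lam : Measure X}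

lemma ofReal_sqrt {t : ℝ} (ht : 0 ≤ t) :
    ENNReal.ofReal (Real.sqrt t) = ENNReal.ofReal t ^ ((1:ℝ)/2) := by
  rw [Real.sqrt_eq_rpow, ENNReal.ofReal_rpow_of_nonneg ht (by norm_num)]

lemma IsDens.lintegral_sqrt_mul {f g : X → ℝ} (hf : IsDens lam f) (hg : IsDens lam g) :
    ∫⁻ x, (ENNReal.ofReal (f x) * ENNReal.ofReal (g x)) ^ ((1:ℝ)/2) ∂lam
      = ENNReal.ofReal (aff lam f g) := by
  have hpt : ∀ x, (ENNReal.ofReal (f x) * ENNReal.ofReal (g x)) ^ ((1:ℝ)/2)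
      = ENNReal.ofReal (Real.sqrt (f x * g x)) := by
    intro x
    rw [← ENNReal.ofReal_mul (hf.nonneg x), ofReal_sqrt (mul_nonneg (hf.nonneg x) (hg.nonneg x))]
  simp_rw [hpt]
  rw [aff, ofReal_integral_eq_lintegral_ofReal (hf.aff_integrable hg)
    (Filter.Eventually.of_forall fun x => Real.sqrt_nonneg _)]

lemma IsDens.enn_hellinger_eq {f g : X → ℝ} (hf : IsDens lam f) (hg : IsDens lam g) :
    (∫⁻ x, ENNReal.ofReal |Real.sqrt (f x) - Real.sqrt (g x)| ^ (2:ℝ) ∂lam) ^ ((1:ℝ)/2)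
      = ENNReal.ofReal (hellinger lam f g) := by
  have hpt : ∀ x, ENNReal.ofReal |Real.sqrt (f x) - Real.sqrt (g x)| ^ (2:ℝ)
      = ENNReal.ofReal ((Real.sqrt (f x) - Real.sqrt (g x)) ^ 2) := by
    intro x
    rw [ENNReal.ofReal_rpow_of_nonneg (abs_nonneg _) (by norm_num)]
    congr 1
    rw [Real.rpow_two, sq_abs]
  simp_rw [hpt]
  rw [← ofReal_integral_eq_lintegral_ofReal (hf.sq_sub_integrable hg)
    (Filter.Eventually.of_forall fun x => sq_nonneg _), hellinger,
    ofReal_sqrt (integral_nonneg fun x => sq_nonneg _)]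

lemma IsDens.hellinger_triangle {f g k : X → ℝ} (hf : IsDens lam f) (hg : IsDens lam g)
    (hk : IsDens lam k) :
    hellinger lam f k ≤ hellinger lam f g + hellinger lam g k := by
  rw [← ENNReal.ofReal_le_ofReal_iff (add_nonneg (hellinger_nonneg f g) (hellinger_nonneg g k)),
    ENNReal.ofReal_add (hellinger_nonneg f g) (hellinger_nonneg g k),
    ← hf.enn_hellinger_eq hk, ← hf.enn_hellinger_eq hg, ← hg.enn_hellinger_eq hk]
  have step1 : (∫⁻ x, ENNReal.ofReal |Real.sqrt (f x) - Real.sqrt (k x)| ^ (2:ℝ) ∂lam)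
      ≤ ∫⁻ x, ((fun x => ENNReal.ofReal |Real.sqrt (f x) - Real.sqrt (g x)|)
        + fun x => ENNReal.ofReal |Real.sqrt (g x) - Real.sqrt (k x)|) x ^ (2:ℝ) ∂lam := by
    refine lintegral_mono fun x => ?_
    refine ENNReal.rpow_le_rpow ?_ (by norm_num)
    rw [Pi.add_apply, ← ENNReal.ofReal_add (abs_nonneg _) (abs_nonneg _)]
    exact ENNReal.ofReal_le_ofReal (abs_sub_le _ _ _)
  refine le_trans (ENNReal.rpow_le_rpow step1 (by norm_num)) ?_
  exact ENNReal.lintegral_Lp_add_le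
    ((hf.meas.sqrt.sub hg.meas.sqrt).abs.ennreal_ofReal.aemeasurable)
    ((hg.meas.sqrt.sub hk.meas.sqrt).abs.ennreal_ofReal.aemeasurable) (by norm_num)

end Stmt6Aux

namespace Stmt6Aux

variable {X : Type*} [MeasurableSpace X] {lam : Measure X} [SigmaFinite lam]
variable {F : Type*} [MeasurableSpace F] {ev : F → X → ℝ}

omit [SigmaFinite lam] in
lemma hellinger_comm (f g : X → ℝ) : hellinger lam f g = hellinger lam g f := by
  unfold hellinger
  congr 1
  refine integral_congr_ae (Filter.Eventually.of_forall fun x => ?_)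
  ring

lemma conj22 : Real.HolderConjugate 2 2 := Real.HolderConjugate.two_two

omit [SigmaFinite lam] in
/-- Cauchy-Schwarz step: `∫⁻ g^{1/2} dQ ≤ (∫⁻ g dQ)^{1/2} * (Q univ)^{1/2}`. -/
lemma lintegral_rpow_half_le {Q : Measure F} {g : F → ℝ≥0∞} (hg : AEMeasurable g Q) :
    ∫⁻ f, g f ^ ((1:ℝ)/2) ∂Q ≤ (∫⁻ f, g f ∂Q) ^ ((1:ℝ)/2) * Q Set.univ ^ ((1:ℝ)/2) := by
  have h := ENNReal.lintegral_mul_le_Lp_mul_Lq Q conj22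
    (f := fun f => g f ^ ((1:ℝ)/2)) (g := fun _ => (1:ℝ≥0∞)) (hg.pow_const _) aemeasurable_const
  simp only [Pi.mul_apply, mul_one, ENNReal.one_rpow, lintegral_const, one_mul] at h
  have hpt : ∀ f, (g f ^ ((1:ℝ)/2)) ^ (2:ℝ) = g f := by
    intro f
    rw [← ENNReal.rpow_mul]
    norm_num
  simp_rw [hpt] at h
  exact h

/-- The key one-step bound. -/
lemma key_step (hev : Measurable (Function.uncurry ev)) (hdens : ∀ f, IsDens lam (ev f))
    {f₀ : X → ℝ} (hf₀ : IsDens lam f₀) {f₁ : X → ℝ} (hf₁ : IsDens lam f₁)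
    {δ ε : ℝ} (hδ : 0 < δ) (hδε : δ < ε) (hε1 : ε < hellinger lam f₁ f₀)
    {S : Set F} (hS : ∀ f ∈ S, hellinger lam (ev f) f₁ ≤ δ)
    (Q : Measure F) [SFinite Q] (hQS : Q Sᶜ = 0) :
    ∫⁻ y, ((∫⁻ f, ENNReal.ofReal (ev f y) ∂Q) * ENNReal.ofReal (f₀ y)) ^ ((1:ℝ)/2) ∂lam
      ≤ ENNReal.ofReal (1 - (ε - δ)^2/2) * (Q Set.univ) ^ ((1:ℝ)/2) := by
  -- basic numeric facts
  have hh2 := hf₁.hellinger_sq_le_two hf₀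
  have hεpos : 0 < ε := hδ.trans hδε
  have hγpos : 0 < ε - δ := by linarith
  have hγ2 : (ε - δ)^2 < 2 := by nlinarith [hellinger_nonneg (lam := lam) f₁ f₀]
  have hδ2 : δ^2 < 2 := by nlinarith [hellinger_nonneg (lam := lam) f₁ f₀]
  have hβpos : (0:ℝ) < 1 - (ε - δ)^2/2 := by linarith
  -- measurability
  have huncm : Measurable fun p : X × F => ENNReal.ofReal (ev p.2 p.1) :=
    (hev.comp measurable_swap).ennreal_ofReal
  have hPm : Measurable fun y => ∫⁻ f, ENNReal.ofReal (ev f y) ∂Q :=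
    Measurable.lintegral_prod_right (f := fun y f => ENNReal.ofReal (ev f y)) huncm
  set P : X → ℝ≥0∞ := fun y => ∫⁻ f, ENNReal.ofReal (ev f y) ∂Q with hP
  set c : ℝ≥0∞ := Q Set.univ with hc
  have hPint : ∫⁻ y, P y ∂lam = c := by
    rw [hP, lintegral_lintegral_swap huncm.aemeasurable]
    simp_rw [fun f => (hdens f).lintegral_one]
    simp [hc]
  rcases eq_or_ne c 0 with hc0 | hc0
  · have hQ0 : Q = 0 := Measure.measure_univ_eq_zero.mp (hc.symm.trans hc0)
    subst hQ0
    simp [hP, ENNReal.zero_rpow_of_pos (by norm_num : (0:ℝ) < 1/2)]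
  rcases eq_or_ne c ∞ with hctop | hctop
  · rw [hctop]
    have : ENNReal.ofReal (1 - (ε - δ)^2/2) * (⊤:ℝ≥0∞) ^ ((1:ℝ)/2) = ⊤ := by
      rw [ENNReal.top_rpow_of_pos (by norm_num)]
      exact ENNReal.mul_top (by simp only [ne_eq, ENNReal.ofReal_eq_zero, not_le]; linarith)
    rw [this]; exact le_top
  -- 0 < c < ∞ : define the normalized predictive density q
  have hPfin : ∀ᵐ y ∂lam, P y < ∞ := ae_lt_top hPm (by rw [hPint]; exact hctop)
  set q : X → ℝ := fun y => (P y).toReal / c.toReal with hq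
  have hctR : 0 < c.toReal := ENNReal.toReal_pos hc0 hctop
  have hqdens : IsDens lam q := by
    refine ⟨(hPm.ennreal_toReal).div_const _, fun y => by positivity, ?_⟩
    rw [hq]
    simp only [div_eq_mul_inv]
    rw [integral_mul_const, integral_toReal hPm.aemeasurable hPfin, hPint,
      mul_inv_cancel₀ (ne_of_gt hctR)]
  have hae : ∀ᵐ y ∂lam, P y = c * ENNReal.ofReal (q y) := by
    filter_upwards [hPfin] with y hy
    rw [hq]
    simp only []
    rw [ENNReal.ofReal_div_of_pos hctR, ENNReal.ofReal_toReal hy.ne,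
      ENNReal.ofReal_toReal hctop, ENNReal.mul_div_cancel hc0 hctop]
  -- rewriting lintegrals against q
  have hLHS : ∀ g : X → ℝ, IsDens lam g →
      ∫⁻ y, (P y * ENNReal.ofReal (g y)) ^ ((1:ℝ)/2) ∂lam
        = c ^ ((1:ℝ)/2) * ENNReal.ofReal (aff lam q g) := by
    intro g hgd
    rw [← hqdens.lintegral_sqrt_mul hgd, ← lintegral_const_mul
      (f := fun y => (ENNReal.ofReal (q y) * ENNReal.ofReal (g y)) ^ ((1:ℝ)/2)) _
      ((hqdens.meas.ennreal_ofReal.mul hgd.meas.ennreal_ofReal).pow_const _)]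
    refine lintegral_congr_ae ?_
    filter_upwards [hae] with y hy
    rw [hy, mul_assoc, ENNReal.mul_rpow_of_nonneg _ _ (by norm_num)]
  -- Jensen / Cauchy-Schwarz : aff q f₁ ≥ 1 - δ²/2
  have haffq : ENNReal.ofReal (1 - δ^2/2) ≤ ENNReal.ofReal (aff lam q f₁) := by
    have hQae : ∀ᵐ f ∂Q, f ∈ S := by
      rw [ae_iff]
      exact hQS
    have h1 : ENNReal.ofReal (1 - δ^2/2) * c ≤ ∫⁻ f, ENNReal.ofReal (aff lam (ev f) f₁) ∂Q := by
      calc ENNReal.ofReal (1 - δ^2/2) * c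
          = ∫⁻ _, ENNReal.ofReal (1 - δ^2/2) ∂Q := by rw [lintegral_const, hc]
        _ ≤ _ := by
            refine lintegral_mono_ae ?_
            filter_upwards [hQae] with f hf
            refine ENNReal.ofReal_le_ofReal ?_
            have hle := hS f hf
            have haf := (hdens f).aff_eq hf₁
            have hn := hellinger_nonneg (lam := lam) (ev f) f₁
            nlinarith
    have h2 : ∫⁻ f, ENNReal.ofReal (aff lam (ev f) f₁) ∂Q
        ≤ c ^ ((1:ℝ)/2) * (c ^ ((1:ℝ)/2) * ENNReal.ofReal (aff lam q f₁)) := by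
      have heq : ∀ f, ENNReal.ofReal (aff lam (ev f) f₁)
          = ∫⁻ y, (ENNReal.ofReal (ev f y) * ENNReal.ofReal (f₁ y)) ^ ((1:ℝ)/2) ∂lam :=
        fun f => ((hdens f).lintegral_sqrt_mul hf₁).symm
      simp_rw [heq]
      rw [lintegral_lintegral_swap]
      swap
      · exact ((hev.ennreal_ofReal.mul
          (hf₁.meas.ennreal_ofReal.comp measurable_snd)).pow_const _).aemeasurable
      calc ∫⁻ y, ∫⁻ f, (ENNReal.ofReal (ev f y) * ENNReal.ofReal (f₁ y)) ^ ((1:ℝ)/2) ∂Q ∂lam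
          ≤ ∫⁻ y, (P y ^ ((1:ℝ)/2) * c ^ ((1:ℝ)/2)) * ENNReal.ofReal (f₁ y) ^ ((1:ℝ)/2) ∂lam := by
            refine lintegral_mono fun y => ?_
            have hmy : AEMeasurable (fun f => ENNReal.ofReal (ev f y)) Q :=
              ((hev.comp (measurable_id.prodMk measurable_const)).ennreal_ofReal).aemeasurable
            calc ∫⁻ f, (ENNReal.ofReal (ev f y) * ENNReal.ofReal (f₁ y)) ^ ((1:ℝ)/2) ∂Q
                = ∫⁻ f, ENNReal.ofReal (ev f y) ^ ((1:ℝ)/2) * ENNReal.ofReal (f₁ y) ^ ((1:ℝ)/2) ∂Q := by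
                  simp_rw [ENNReal.mul_rpow_of_nonneg _ _ (by norm_num : (0:ℝ) ≤ 1/2)]
              _ = (∫⁻ f, ENNReal.ofReal (ev f y) ^ ((1:ℝ)/2) ∂Q) * ENNReal.ofReal (f₁ y) ^ ((1:ℝ)/2) :=
                  lintegral_mul_const'' _ (hmy.pow_const _)
              _ ≤ (P y ^ ((1:ℝ)/2) * c ^ ((1:ℝ)/2)) * ENNReal.ofReal (f₁ y) ^ ((1:ℝ)/2) :=
                  mul_le_mul_left (lintegral_rpow_half_le hmy) _
        _ = c ^ ((1:ℝ)/2) * ∫⁻ y, (P y * ENNReal.ofReal (f₁ y)) ^ ((1:ℝ)/2) ∂lam := by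
            rw [← lintegral_const_mul
              (f := fun y => (P y * ENNReal.ofReal (f₁ y)) ^ ((1:ℝ)/2)) _
              ((hPm.mul hf₁.meas.ennreal_ofReal).pow_const _)]
            refine lintegral_congr fun y => ?_
            rw [ENNReal.mul_rpow_of_nonneg _ _ (by norm_num : (0:ℝ) ≤ 1/2)]
            ring
        _ = c ^ ((1:ℝ)/2) * (c ^ ((1:ℝ)/2) * ENNReal.ofReal (aff lam q f₁)) := by
            rw [hLHS f₁ hf₁]
    have h3 : ENNReal.ofReal (1 - δ^2/2) * c ≤ ENNReal.ofReal (aff lam q f₁) * c := by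
      refine h1.trans (h2.trans_eq ?_)
      rw [← mul_assoc, ← ENNReal.rpow_add _ _ hc0 hctop]
      norm_num
      ring
    exact (ENNReal.mul_le_mul_iff_left hc0 hctop).mp h3
  -- from affinity to Hellinger distance
  have hqf₁ : hellinger lam q f₁ ≤ δ := by
    have := (ENNReal.ofReal_le_ofReal_iff (hqdens.aff_nonneg hf₁)).mp haffq
    have haf := hqdens.aff_eq hf₁
    have hn := hellinger_nonneg (lam := lam) q f₁
    nlinarith
  have hqf₀ : ε - δ ≤ hellinger lam q f₀ := by
    have htri := hf₁.hellinger_triangle hqdens hf₀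
    rw [hellinger_comm f₁ q] at htri
    linarith
  have haff₀ : aff lam q f₀ ≤ 1 - (ε - δ)^2/2 := by
    have haf := hqdens.aff_eq hf₀
    nlinarith
  calc ∫⁻ y, (P y * ENNReal.ofReal (f₀ y)) ^ ((1:ℝ)/2) ∂lam
      = c ^ ((1:ℝ)/2) * ENNReal.ofReal (aff lam q f₀) := hLHS f₀ hf₀
    _ ≤ c ^ ((1:ℝ)/2) * ENNReal.ofReal (1 - (ε - δ)^2/2) :=
        mul_le_mul_right (ENNReal.ofReal_le_ofReal haff₀) _
    _ = ENNReal.ofReal (1 - (ε - δ)^2/2) * c ^ ((1:ℝ)/2) := mul_comm _ _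

end Stmt6Aux

namespace Stmt6Aux

variable {X : Type*} [MeasurableSpace X] {lam : Measure X} [SigmaFinite lam]
variable {F : Type*} [MeasurableSpace F] {ev : F → X → ℝ} {f₀ : X → ℝ}

lemma ofReal_div_mul_le (a b : ℝ) (hb : 0 ≤ b) :
    ENNReal.ofReal (a / b) * ENNReal.ofReal b ≤ ENNReal.ofReal a := by
  rcases le_or_gt a 0 with ha | ha
  · have : a / b ≤ 0 := by
      rw [div_eq_mul_inv]
      exact mul_nonpos_of_nonpos_of_nonneg ha (inv_nonneg.mpr hb)
    rw [ENNReal.ofReal_eq_zero.mpr this, zero_mul]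
    exact zero_le
  rcases eq_or_lt_of_le hb with hb0 | hb0
  · rw [← hb0, div_zero, ENNReal.ofReal_zero, zero_mul]
    exact zero_le
  · rw [← ENNReal.ofReal_mul (div_nonneg ha.le hb), div_mul_cancel₀ _ (ne_of_gt hb0)]

omit [SigmaFinite lam] in
lemma measR (hev : Measurable (Function.uncurry ev)) (hf₀m : Measurable f₀)
    {γ : Type*} [MeasurableSpace γ] {u : γ → X} {v : γ → F}
    (hu : Measurable u) (hv : Measurable v) :
    Measurable fun a => ENNReal.ofReal (ev (v a) (u a) / f₀ (u a)) :=
  ((hev.comp (hv.prodMk hu)).div (hf₀m.comp hu)).ennreal_ofReal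

omit [SigmaFinite lam] in
lemma measW (hev : Measurable (Function.uncurry ev)) (hf₀m : Measurable f₀) (n : ℕ) :
    Measurable fun p : (Fin n → X) × F =>
      ∏ i, ENNReal.ofReal (ev p.2 (p.1 i) / f₀ (p.1 i)) := by
  apply Finset.measurable_prod
  intro i _
  exact measR hev hf₀m ((measurable_pi_apply i).comp measurable_fst) measurable_snd

omit [SigmaFinite lam] in
lemma measP (hev : Measurable (Function.uncurry ev)) (hf₀m : Measurable f₀)
    (Q : Measure F) [SFinite Q] :
    Measurable fun y : X => ∫⁻ f, ENNReal.ofReal (ev f y / f₀ y) ∂Q :=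
  Measurable.lintegral_prod_right
    (f := fun (y : X) f => ENNReal.ofReal (ev f y / f₀ y))
    (measR hev hf₀m measurable_fst measurable_snd)

omit [SigmaFinite lam] in
lemma measGG (hev : Measurable (Function.uncurry ev)) (hf₀m : Measurable f₀)
    (n : ℕ) (Q : Measure F) [SFinite Q] :
    Measurable fun x : Fin n → X =>
      (∫⁻ f, ∏ i, ENNReal.ofReal (ev f (x i) / f₀ (x i)) ∂Q) ^ ((1:ℝ)/2) := by
  apply Measurable.pow_const
  apply Measurable.lintegral_prod_right
    (f := fun (x : Fin n → X) f => ∏ i, ENNReal.ofReal (ev f (x i) / f₀ (x i)))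
  apply Finset.measurable_prod
  intro i _
  exact measR hev hf₀m ((measurable_pi_apply i).comp measurable_fst) measurable_snd

omit [SigmaFinite lam] in
lemma measG (hev : Measurable (Function.uncurry ev)) (hf₀m : Measurable f₀)
    (n : ℕ) (Q : Measure F) [SFinite Q] :
    Measurable fun p : X × (Fin n → X) =>
      (∫⁻ f, ENNReal.ofReal (ev f p.1 / f₀ p.1)
        * ∏ i, ENNReal.ofReal (ev f (p.2 i) / f₀ (p.2 i)) ∂Q) ^ ((1:ℝ)/2) := by
  apply Measurable.pow_const
  apply Measurable.lintegral_prod_right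
    (f := fun (p : X × (Fin n → X)) f => ENNReal.ofReal (ev f p.1 / f₀ p.1)
      * ∏ i, ENNReal.ofReal (ev f (p.2 i) / f₀ (p.2 i)))
  refine Measurable.mul ?_ ?_
  · exact measR hev hf₀m (measurable_fst.comp measurable_fst) measurable_snd
  · apply Finset.measurable_prod
    intro i _
    exact measR hev hf₀m
      ((measurable_pi_apply i).comp (measurable_snd.comp measurable_fst)) measurable_snd

lemma pi_induction (hev : Measurable (Function.uncurry ev)) (hdens : ∀ f, IsDens lam (ev f))
    (hf₀ : IsDens lam f₀) {f₁ : X → ℝ} (hf₁ : IsDens lam f₁)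
    {δ ε : ℝ} (hδ : 0 < δ) (hδε : δ < ε) (hε1 : ε < hellinger lam f₁ f₀)
    {S : Set F} (hS : ∀ f ∈ S, hellinger lam (ev f) f₁ ≤ δ) :
    ∀ (n : ℕ) (Q : Measure F) [SFinite Q], Q Sᶜ = 0 →
      ∫⁻ x : Fin n → X, (∫⁻ f, ∏ i, ENNReal.ofReal (ev f (x i) / f₀ (x i)) ∂Q) ^ ((1:ℝ)/2)
          ∂(Measure.pi fun _ => lam.withDensity fun t => ENNReal.ofReal (f₀ t))
        ≤ ENNReal.ofReal (1 - (ε - δ)^2/2) ^ n * Q Set.univ ^ ((1:ℝ)/2) := by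
  have hμprob : IsProbabilityMeasure (lam.withDensity fun t => ENNReal.ofReal (f₀ t)) := ⟨by
    rw [withDensity_apply _ MeasurableSet.univ, setLIntegral_univ, hf₀.lintegral_one]⟩
  intro n
  induction n with
  | zero =>
    intro Q _ hQS
    simp [lintegral_one]
  | succ n ih =>
    intro Q _ hQS
    have hpres : MeasurePreserving (MeasurableEquiv.piFinSuccAbove (fun _ : Fin (n+1) => X) 0)
        (Measure.pi fun _ => lam.withDensity fun t => ENNReal.ofReal (f₀ t))
        ((lam.withDensity fun t => ENNReal.ofReal (f₀ t)).prod
          (Measure.pi fun _ => lam.withDensity fun t => ENNReal.ofReal (f₀ t))) :=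
      measurePreserving_piFinSuccAbove
        (fun _ : Fin (n+1) => lam.withDensity fun t => ENNReal.ofReal (f₀ t)) 0
    calc ∫⁻ x : Fin (n+1) → X,
          (∫⁻ f, ∏ i, ENNReal.ofReal (ev f (x i) / f₀ (x i)) ∂Q) ^ ((1:ℝ)/2)
          ∂(Measure.pi fun _ => lam.withDensity fun t => ENNReal.ofReal (f₀ t))
        = ∫⁻ p : X × (Fin n → X),
            (∫⁻ f, ENNReal.ofReal (ev f p.1 / f₀ p.1)
              * ∏ i, ENNReal.ofReal (ev f (p.2 i) / f₀ (p.2 i)) ∂Q) ^ ((1:ℝ)/2)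
            ∂((lam.withDensity fun t => ENNReal.ofReal (f₀ t)).prod
              (Measure.pi fun _ => lam.withDensity fun t => ENNReal.ofReal (f₀ t))) := by
          rw [← hpres.lintegral_comp (measG hev hf₀.meas n Q)]
          refine lintegral_congr fun x => ?_
          simp only [MeasurableEquiv.piFinSuccAbove_apply]
          congr 1
          refine lintegral_congr fun f => ?_
          exact Fin.prod_univ_succAbove (fun i => ENNReal.ofReal (ev f (x i) / f₀ (x i))) 0
      _ = ∫⁻ x : Fin n → X, ∫⁻ y,
            (∫⁻ f, ENNReal.ofReal (ev f y / f₀ y)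
              * ∏ i, ENNReal.ofReal (ev f (x i) / f₀ (x i)) ∂Q) ^ ((1:ℝ)/2)
            ∂(lam.withDensity fun t => ENNReal.ofReal (f₀ t))
            ∂(Measure.pi fun _ => lam.withDensity fun t => ENNReal.ofReal (f₀ t)) :=
          lintegral_prod_symm _ (measG hev hf₀.meas n Q).aemeasurable
      _ ≤ ∫⁻ x : Fin n → X, ENNReal.ofReal (1 - (ε - δ)^2/2)
            * (∫⁻ f, ∏ i, ENNReal.ofReal (ev f (x i) / f₀ (x i)) ∂Q) ^ ((1:ℝ)/2)
            ∂(Measure.pi fun _ => lam.withDensity fun t => ENNReal.ofReal (f₀ t)) := by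
          refine lintegral_mono fun x => ?_
          have hWxm : Measurable fun f => ∏ i, ENNReal.ofReal (ev f (x i) / f₀ (x i)) :=
            (measW hev hf₀.meas n).comp (measurable_const.prodMk measurable_id)
          have hsupp : (Q.withDensity fun f => ∏ i, ENNReal.ofReal (ev f (x i) / f₀ (x i))) Sᶜ
              = 0 := (withDensity_absolutelyContinuous Q _) hQS
          have step1 : ∀ y, ∫⁻ f, ENNReal.ofReal (ev f y / f₀ y)
                * ∏ i, ENNReal.ofReal (ev f (x i) / f₀ (x i)) ∂Q
              = ∫⁻ f, ENNReal.ofReal (ev f y / f₀ y)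
                ∂(Q.withDensity fun f => ∏ i, ENNReal.ofReal (ev f (x i) / f₀ (x i))) := by
            intro y
            have hgy : Measurable fun f : F => ENNReal.ofReal (ev f y / f₀ y) :=
              measR hev hf₀.meas measurable_const measurable_id
            rw [lintegral_withDensity_eq_lintegral_mul Q hWxm hgy]
            refine lintegral_congr fun f => ?_
            simp [mul_comm]
          have step2 : ∫⁻ y, (∫⁻ f, ENNReal.ofReal (ev f y / f₀ y)
                ∂(Q.withDensity fun f => ∏ i, ENNReal.ofReal (ev f (x i) / f₀ (x i))))
                  ^ ((1:ℝ)/2)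
                ∂(lam.withDensity fun t => ENNReal.ofReal (f₀ t))
              ≤ ENNReal.ofReal (1 - (ε - δ)^2/2)
                * ((Q.withDensity fun f => ∏ i, ENNReal.ofReal (ev f (x i) / f₀ (x i)))
                    Set.univ) ^ ((1:ℝ)/2) := by
            set Q' : Measure F :=
              Q.withDensity fun f => ∏ i, ENNReal.ofReal (ev f (x i) / f₀ (x i)) with hQ'
            have hmono : ∫⁻ y, (∫⁻ f, ENNReal.ofReal (ev f y / f₀ y) ∂Q') ^ ((1:ℝ)/2)
                  ∂(lam.withDensity fun t => ENNReal.ofReal (f₀ t))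
                ≤ ∫⁻ y, ((∫⁻ f, ENNReal.ofReal (ev f y) ∂Q')
                    * ENNReal.ofReal (f₀ y)) ^ ((1:ℝ)/2) ∂lam := by
              rw [lintegral_withDensity_eq_lintegral_mul lam hf₀.meas.ennreal_ofReal
                ((measP hev hf₀.meas Q').pow_const _)]
              refine lintegral_mono fun y => ?_
              simp only [Pi.mul_apply]
              have key0 : (∫⁻ f, ENNReal.ofReal (ev f y / f₀ y) ∂Q')
                    * (ENNReal.ofReal (f₀ y) * ENNReal.ofReal (f₀ y))
                  ≤ (∫⁻ f, ENNReal.ofReal (ev f y) ∂Q') * ENNReal.ofReal (f₀ y) := by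
                have hgy : AEMeasurable (fun f : F => ENNReal.ofReal (ev f y / f₀ y)) Q' :=
                  (measR hev hf₀.meas measurable_const measurable_id).aemeasurable
                have hgy2 : AEMeasurable (fun f : F => ENNReal.ofReal (ev f y)) Q' :=
                  ((hev.comp (measurable_id.prodMk measurable_const)).ennreal_ofReal).aemeasurable
                have hgy3 : AEMeasurable
                    (fun f : F => ENNReal.ofReal (ev f y / f₀ y) * ENNReal.ofReal (f₀ y)) Q' :=
                  hgy.mul aemeasurable_const
                rw [← mul_assoc, ← lintegral_mul_const'' _ hgy, ← lintegral_mul_const'' _ hgy2,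
                  ← lintegral_mul_const'' _ hgy3]
                refine lintegral_mono fun f => ?_
                exact mul_le_mul_left (ofReal_div_mul_le _ _ (hf₀.nonneg y)) _
              calc ENNReal.ofReal (f₀ y)
                    * (∫⁻ f, ENNReal.ofReal (ev f y / f₀ y) ∂Q') ^ ((1:ℝ)/2)
                  = ((∫⁻ f, ENNReal.ofReal (ev f y / f₀ y) ∂Q')
                      * (ENNReal.ofReal (f₀ y) * ENNReal.ofReal (f₀ y))) ^ ((1:ℝ)/2) := by
                    rw [ENNReal.mul_rpow_of_nonneg _ _ (by norm_num : (0:ℝ) ≤ 1/2)]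
                    have hbb : (ENNReal.ofReal (f₀ y) * ENNReal.ofReal (f₀ y)) ^ ((1:ℝ)/2)
                        = ENNReal.ofReal (f₀ y) := by
                      rw [ENNReal.mul_rpow_of_nonneg _ _ (by norm_num : (0:ℝ) ≤ 1/2),
                        ← ENNReal.rpow_add_of_nonneg _ _ (by norm_num) (by norm_num)]
                      norm_num
                    rw [hbb, mul_comm]
                _ ≤ _ := ENNReal.rpow_le_rpow key0 (by norm_num)
            refine hmono.trans ?_
            exact key_step hev hdens hf₀ hf₁ hδ hδε hε1 hS Q' hsupp
          have hQ'univ : (Q.withDensity fun f => ∏ i, ENNReal.ofReal (ev f (x i) / f₀ (x i)))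
                Set.univ
              = ∫⁻ f, ∏ i, ENNReal.ofReal (ev f (x i) / f₀ (x i)) ∂Q := by
            rw [withDensity_apply _ MeasurableSet.univ, setLIntegral_univ]
          simp_rw [step1]
          rw [← hQ'univ]
          exact step2
      _ ≤ ENNReal.ofReal (1 - (ε - δ)^2/2)
            * (ENNReal.ofReal (1 - (ε - δ)^2/2) ^ n * Q Set.univ ^ ((1:ℝ)/2)) := by
          rw [lintegral_const_mul _ (measGG hev hf₀.meas n Q)]
          exact mul_le_mul_right (ih Q hQS) _
      _ = ENNReal.ofReal (1 - (ε - δ)^2/2) ^ (n+1) * Q Set.univ ^ ((1:ℝ)/2) := by ring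

end Stmt6Aux

namespace Stmt6Aux

variable {X : Type*} [MeasurableSpace X]

lemma map_eq_pi {Ω : Type*} [MeasurableSpace Ω] (ν : Measure Ω)
    (Xs : ℕ → Ω → X) (hXmeas : ∀ i, Measurable (Xs i))
    (hindep : iIndepFun Xs ν) (μ : Measure X)
    [SigmaFinite μ] (hlaw : ∀ i, Measure.map (Xs i) ν = μ) (n : ℕ) :
    Measure.pi (fun _ : Fin n => μ) = Measure.map (fun ω (i : Fin n) => Xs i ω) ν := by
  classical
  refine Measure.pi_eq fun s hs => ?_
  rw [Measure.map_apply (f := fun ω (i : Fin n) => Xs i ω)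
    (measurable_pi_lambda _ fun i => hXmeas i) (MeasurableSet.univ_pi hs)]
  set sets : ℕ → Set X := fun i => if h : i < n then s ⟨i, h⟩ else Set.univ with hsets
  have hsm : ∀ i ∈ Finset.range n, MeasurableSet (sets i) := by
    intro i _
    by_cases h : i < n
    · simp only [hsets, dif_pos h]
      exact hs _
    · simp only [hsets, dif_neg h]
      exact MeasurableSet.univ
  have hpre : (fun ω (i : Fin n) => Xs i ω) ⁻¹' Set.pi Set.univ s
      = ⋂ i ∈ Finset.range n, Xs i ⁻¹' sets i := by
    ext ω
    simp only [Set.mem_preimage, Set.mem_pi, Set.mem_univ, true_implies, Set.mem_iInter,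
      Finset.mem_range, hsets]
    constructor
    · intro h i hi
      simp only [dif_pos hi]
      exact h ⟨i, hi⟩
    · intro h i
      have := h i.1 i.2
      simpa only [dif_pos i.2, Fin.eta] using this
  rw [hpre, hindep.measure_inter_preimage_eq_mul (Finset.range n) hsm]
  have hlaweq : ∀ i ∈ Finset.range n, ν (Xs i ⁻¹' sets i) = μ (sets i) := by
    intro i hi
    rw [← hlaw i, Measure.map_apply (hXmeas i) (hsm i hi)]
  rw [Finset.prod_congr rfl hlaweq, ← Fin.prod_univ_eq_prod_range (fun i => μ (sets i)) n]
  refine Finset.prod_congr rfl fun i _ => ?_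
  have heq : sets i.1 = s i := by
    simp only [hsets]
    rw [dif_pos i.isLt]
  rw [heq]

end Stmt6Aux


open Stmt6Aux

/-- If each set `A j` of a cover of `A_{ε_n} = {f : h(f,f₀) > ε_n}` is contained in a
Hellinger ball of radius `δ_n < ε_n` centered at some `f_j ∈ A j`, and `γ_n = ε_n − δ_n`,
then for any `η_n > 0`,
`F₀^∞(Σ_j L^{(n)}_{n,j} > exp(−n η_n)) ≤ exp(−n(−log(1−γ_n²/2) − η_n)) · K_{ε_n}`. -/
theorem stmt6 {X : Type*} [MeasurableSpace X] [TopologicalSpace X] [PolishSpace X]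
    [BorelSpace X] (lam : Measure X) [SigmaFinite lam]
    {F : Type*} [MeasurableSpace F] (ev : F → X → ℝ)
    (hev : Measurable (Function.uncurry ev))
    (hdens : ∀ f, (∀ x, 0 ≤ ev f x) ∧ ∫ x, ev f x ∂lam = 1)
    (Pr : Measure F) [IsProbabilityMeasure Pr]
    (f₀ : X → ℝ) (hf₀ : Measurable f₀ ∧ (∀ x, 0 ≤ f₀ x) ∧ ∫ x, f₀ x ∂lam = 1)
    {Ω : Type*} [MeasurableSpace Ω] (ν : Measure Ω) [IsProbabilityMeasure ν]
    (Xs : ℕ → Ω → X) (hXmeas : ∀ i, Measurable (Xs i))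
    (hindep : iIndepFun Xs ν)
    (hlaw : ∀ i, Measure.map (Xs i) ν = lam.withDensity (fun x => ENNReal.ofReal (f₀ x)))
    (n : ℕ) (εn δn ηn : ℝ) (hδpos : 0 < δn) (hδε : δn < εn) (hη : 0 < ηn)
    (A : ℕ → Set F) (hAmeas : ∀ j, MeasurableSet (A j))
    (hAsub : ∀ j, A j ⊆ {f | εn < hellinger lam (ev f) f₀})
    (hAcover : {f | εn < hellinger lam (ev f) f₀} ⊆ ⋃ j, A j)
    (hAball : ∀ j, ∃ fc ∈ A j, ∀ f ∈ A j, hellinger lam (ev f) (ev fc) ≤ δn) :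
    ν {ω | ENNReal.ofReal (Real.exp (-(n : ℝ) * ηn)) <
        ∑' j : ℕ, (∫⁻ f in A j,
          ENNReal.ofReal (∏ i ∈ Finset.range n, ev f (Xs i ω) / f₀ (Xs i ω)) ∂Pr)
            ^ ((1 : ℝ)/2)}
      ≤ ENNReal.ofReal
          (Real.exp (-(n : ℝ) * (-Real.log (1 - (εn - δn) ^ 2 / 2) - ηn))) *
        ∑' j : ℕ, (Pr (A j)) ^ ((1 : ℝ)/2) := by
  classical
  obtain ⟨hf₀m, hf₀nn, hf₀i⟩ := hf₀
  have hf₀d : IsDens lam f₀ := ⟨hf₀m, hf₀nn, hf₀i⟩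
  have hde : ∀ f, IsDens lam (ev f) := fun f =>
    ⟨hev.comp (measurable_const.prodMk measurable_id), (hdens f).1, (hdens f).2⟩
  choose fc hfcA hfcball using hAball
  -- numeric facts
  have hh2 := (hde (fc 0)).hellinger_sq_le_two hf₀d
  have hε1 : εn < hellinger lam (ev (fc 0)) f₀ := hAsub 0 (hfcA 0)
  have hγpos : 0 < εn - δn := by linarith
  have hγ2 : (εn - δn)^2 < 2 := by
    nlinarith [hellinger_nonneg (lam := lam) (ev (fc 0)) f₀]
  have hβpos : (0:ℝ) < 1 - (εn - δn)^2/2 := by linarith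
  -- measurability of each summand
  have hLm : ∀ j, Measurable fun ω => (∫⁻ f in A j,
      ENNReal.ofReal (∏ i ∈ Finset.range n, ev f (Xs i ω) / f₀ (Xs i ω)) ∂Pr)
        ^ ((1:ℝ)/2) := by
    intro j
    apply Measurable.pow_const
    apply Measurable.lintegral_prod_right (f := fun ω f =>
      ENNReal.ofReal (∏ i ∈ Finset.range n, ev f (Xs i ω) / f₀ (Xs i ω)))
    apply Measurable.ennreal_ofReal
    apply Finset.measurable_prod
    intro i _
    exact (hev.comp (measurable_snd.prodMk ((hXmeas i).comp measurable_fst))).div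
      (hf₀m.comp ((hXmeas i).comp measurable_fst))
  set SS : Ω → ℝ≥0∞ := fun ω => ∑' j : ℕ, (∫⁻ f in A j,
      ENNReal.ofReal (∏ i ∈ Finset.range n, ev f (Xs i ω) / f₀ (Xs i ω)) ∂Pr)
        ^ ((1:ℝ)/2) with hSS
  set c : ℝ≥0∞ := ENNReal.ofReal (Real.exp (-(n:ℝ) * ηn)) with hcdef
  have hc0 : c ≠ 0 := by
    rw [hcdef]
    simp only [ne_eq, ENNReal.ofReal_eq_zero, not_le]
    exact Real.exp_pos _
  have hctop : c ≠ ∞ := ENNReal.ofReal_ne_top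
  have hSm : Measurable SS := Measurable.ennreal_tsum fun j => hLm j
  -- Markov
  have markov := mul_meas_ge_le_lintegral₀ (μ := ν) hSm.aemeasurable c
  have h1 : ν {ω | c < SS ω} ≤ c⁻¹ * ∫⁻ ω, SS ω ∂ν := by
    refine (measure_mono (fun ω (h : c < SS ω) => le_of_lt h)).trans ?_
    calc ν {ω | c ≤ SS ω} = c⁻¹ * (c * ν {ω | c ≤ SS ω}) := by
          rw [← mul_assoc, ENNReal.inv_mul_cancel hc0 hctop, one_mul]
      _ ≤ c⁻¹ * ∫⁻ ω, SS ω ∂ν := mul_le_mul_right markov _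
  -- per-j bound
  have hperj : ∀ j, ∫⁻ ω, (∫⁻ f in A j,
      ENNReal.ofReal (∏ i ∈ Finset.range n, ev f (Xs i ω) / f₀ (Xs i ω)) ∂Pr)
        ^ ((1:ℝ)/2) ∂ν
      ≤ ENNReal.ofReal (1 - (εn - δn)^2/2) ^ n * (Pr (A j)) ^ ((1:ℝ)/2) := by
    intro j
    have hrw : ∀ ω, (∫⁻ f in A j,
        ENNReal.ofReal (∏ i ∈ Finset.range n, ev f (Xs i ω) / f₀ (Xs i ω)) ∂Pr)
          ^ ((1:ℝ)/2)
        = (∫⁻ f, ∏ i : Fin n, ENNReal.ofReal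
            (ev f ((fun i : Fin n => Xs i ω) i) / f₀ ((fun i : Fin n => Xs i ω) i))
            ∂(Pr.restrict (A j))) ^ ((1:ℝ)/2) := by
      intro ω
      congr 1
      refine lintegral_congr fun f => ?_
      rw [← ENNReal.ofReal_prod_of_nonneg
        (fun i _ => div_nonneg ((hdens f).1 _) (hf₀nn _))]
      rw [← Fin.prod_univ_eq_prod_range (fun i => ev f (Xs i ω) / f₀ (Xs i ω)) n]
    simp_rw [hrw]
    have hmappi := map_eq_pi ν Xs hXmeas hindep
      (lam.withDensity fun x => ENNReal.ofReal (f₀ x)) hlaw n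
    have hmapint : ∫⁻ ω, (∫⁻ f, ∏ i : Fin n, ENNReal.ofReal
          (ev f ((fun i : Fin n => Xs i ω) i) / f₀ ((fun i : Fin n => Xs i ω) i))
          ∂(Pr.restrict (A j))) ^ ((1:ℝ)/2) ∂ν
        = ∫⁻ x : Fin n → X, (∫⁻ f, ∏ i, ENNReal.ofReal (ev f (x i) / f₀ (x i))
            ∂(Pr.restrict (A j))) ^ ((1:ℝ)/2)
          ∂(Measure.pi fun _ => lam.withDensity fun t => ENNReal.ofReal (f₀ t)) := by
      rw [hmappi, lintegral_map (measGG hev hf₀m n (Pr.restrict (A j)))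
        (measurable_pi_lambda _ fun i => hXmeas i)]
    rw [hmapint]
    have hsupp : (Pr.restrict (A j)) (A j)ᶜ = 0 := by
      rw [Measure.restrict_apply (hAmeas j).compl, Set.compl_inter_self]
      exact measure_empty
    have := pi_induction hev hde hf₀d (hde (fc j)) hδpos hδε (hAsub j (hfcA j))
      (hfcball j) n (Pr.restrict (A j)) hsupp
    rwa [Measure.restrict_apply_univ] at this
  -- put everything together
  have h2 : ∫⁻ ω, SS ω ∂ν
      ≤ ENNReal.ofReal (1 - (εn - δn)^2/2) ^ n * ∑' j : ℕ, (Pr (A j)) ^ ((1:ℝ)/2) := by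
    rw [hSS, lintegral_tsum fun j => (hLm j).aemeasurable]
    rw [← ENNReal.tsum_mul_left]
    exact ENNReal.tsum_le_tsum fun j => hperj j
  have harit : c⁻¹ * ENNReal.ofReal (1 - (εn - δn)^2/2) ^ n
      = ENNReal.ofReal
        (Real.exp (-(n : ℝ) * (-Real.log (1 - (εn - δn) ^ 2 / 2) - ηn))) := by
    have hcinv : c⁻¹ = ENNReal.ofReal (Real.exp ((n:ℝ) * ηn)) := by
      rw [hcdef, show -(n:ℝ) * ηn = -((n:ℝ) * ηn) by ring, Real.exp_neg,
        ENNReal.ofReal_inv_of_pos (Real.exp_pos _), inv_inv]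
    have hβn : ENNReal.ofReal (1 - (εn - δn)^2/2) ^ n
        = ENNReal.ofReal (Real.exp ((n:ℝ) * Real.log (1 - (εn - δn)^2/2))) := by
      rw [← ENNReal.ofReal_pow hβpos.le, Real.exp_nat_mul, Real.exp_log hβpos]
    rw [hcinv, hβn, ← ENNReal.ofReal_mul (Real.exp_nonneg _), ← Real.exp_add]
    congr 1
    ring
  calc ν {ω | c < SS ω} ≤ c⁻¹ * ∫⁻ ω, SS ω ∂ν := h1
    _ ≤ c⁻¹ * (ENNReal.ofReal (1 - (εn - δn)^2/2) ^ n
        * ∑' j : ℕ, (Pr (A j)) ^ ((1:ℝ)/2)) := mul_le_mul_right h2 _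
    _ = (c⁻¹ * ENNReal.ofReal (1 - (εn - δn)^2/2) ^ n)
        * ∑' j : ℕ, (Pr (A j)) ^ ((1:ℝ)/2) := by rw [mul_assoc]
    _ = _ := by rw [harit]
end

section
/- Let C > 1, r₀ ∈ ℕ, and let (p_r)_{r≥1} be nonnegative reals with p_r ≤ exp(−4 r log r) for all r ≥ r₀. Then there exists M₀ > 0 such that for every M ≥ M₀, setting ε_n = M (log n)^{1/3} n^{−1/3}, one has exp(−n ε_n²) · Σ_{r=1}^∞ (C/ε_n)^r √(p_r) → 0 as n → +∞ (the series being finite for every sufficiently large n). -/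
open Filter

private lemma aux14_loglin (K : ℝ) : ∀ᶠ n : ℕ in atTop, K * Real.log n ≤ (n:ℝ) := by
  have h := (Real.isLittleO_log_id_atTop.const_mul_left K).bound one_pos
  filter_upwards [tendsto_natCast_atTop_atTop.eventually h] with n hn
  calc K * Real.log n ≤ ‖K * Real.log n‖ := le_abs_self _
    _ ≤ 1 * ‖((n:ℝ) : ℝ)‖ := hn
    _ = (n:ℝ) := by rw [one_mul, Real.norm_natCast]

private lemma aux14_cuberoot {K L x : ℝ} (hK : 0 ≤ K) (hL : 0 ≤ L) (hx : 0 ≤ x)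
    (h : K^3 * L ≤ x) : K * L^((1:ℝ)/3) ≤ x^((1:ℝ)/3) := by
  have h1 : ((K^3 * L) : ℝ)^((1:ℝ)/3) ≤ x^((1:ℝ)/3) :=
    Real.rpow_le_rpow (by positivity) h (by norm_num)
  calc K * L^((1:ℝ)/3) = (K^3)^((1:ℝ)/3) * L^((1:ℝ)/3) := by
        rw [← Real.rpow_natCast K 3, ← Real.rpow_mul hK]; norm_num
    _ = (K^3 * L)^((1:ℝ)/3) := (Real.mul_rpow (by positivity) hL).symm
    _ ≤ _ := h1

private lemma aux14_tail (A : ℝ) (hA : 0 ≤ A) (q : ℝ) (j : ℕ) (hj2 : 2 ≤ j)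
    (hjA : A ≤ (j:ℝ)) (hpj : q ≤ Real.exp (-4 * (j:ℝ) * Real.log j)) :
    A^j * Real.sqrt q ≤ (1/2:ℝ)^j := by
  have hj1 : (1:ℝ) ≤ (j:ℝ) := by exact_mod_cast Nat.one_le_of_lt hj2
  have hjpos : (0:ℝ) < j := by linarith
  have hsq : Real.sqrt q ≤ Real.exp (-2 * (j:ℝ) * Real.log j) := by
    calc Real.sqrt q ≤ Real.sqrt (Real.exp (-4 * (j:ℝ) * Real.log j)) :=
          Real.sqrt_le_sqrt hpj
      _ = Real.exp (-2 * (j:ℝ) * Real.log j) := by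
          rw [show (-4 * (j:ℝ) * Real.log j)
              = (-2 * (j:ℝ) * Real.log j) + (-2 * (j:ℝ) * Real.log j) by ring,
            Real.exp_add, Real.sqrt_mul_self (Real.exp_nonneg _)]
  have hAj : A^j ≤ Real.exp ((j:ℝ) * Real.log j) := by
    calc A^j ≤ (j:ℝ)^j := pow_le_pow_left₀ hA hjA j
      _ = Real.exp (Real.log j) ^ j := by rw [Real.exp_log hjpos]
      _ = Real.exp ((j:ℝ) * Real.log j) := (Real.exp_nat_mul _ j).symm
  calc A^j * Real.sqrt q
      ≤ Real.exp ((j:ℝ) * Real.log j) * Real.exp (-2 * (j:ℝ) * Real.log j) :=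
        mul_le_mul hAj hsq (Real.sqrt_nonneg _) (Real.exp_nonneg _)
    _ = Real.exp (-((j:ℝ) * Real.log j)) := by rw [← Real.exp_add]; ring_nf
    _ ≤ Real.exp (-((j:ℝ) * Real.log 2)) := by
        apply Real.exp_le_exp.2
        have h2 : Real.log 2 ≤ Real.log j := Real.log_le_log two_pos (by exact_mod_cast hj2)
        nlinarith
    _ = (1/2:ℝ)^j := by
        rw [show (-((j:ℝ) * Real.log 2)) = (j:ℝ) * (-Real.log 2) by ring, Real.exp_nat_mul,
          Real.exp_neg, Real.exp_log two_pos]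
        norm_num

set_option maxHeartbeats 2000000 in
private lemma aux14_main (C : ℝ) (hC : 1 < C) (r₀ : ℕ) (p : ℕ → ℝ) (hp0 : ∀ r, 0 ≤ p r)
    (hp : ∀ r : ℕ, r₀ ≤ r → p r ≤ Real.exp (-4 * (r : ℝ) * Real.log r))
    (M : ℝ) (hM : C + 3 ≤ M) (ε : ℕ → ℝ)
    (hε : ∀ n : ℕ, ε n = M * (Real.log n) ^ ((1 : ℝ)/3) / (n : ℝ) ^ ((1 : ℝ)/3)) :
    (∀ᶠ n : ℕ in atTop, Summable (fun r : ℕ => (C / ε n) ^ (r + 1) * Real.sqrt (p (r + 1)))) ∧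
      Tendsto (fun n : ℕ => Real.exp (-((n : ℝ) * (ε n) ^ 2)) *
          ∑' r : ℕ, (C / ε n) ^ (r + 1) * Real.sqrt (p (r + 1))) atTop (nhds 0) := by
  have hC0 : (0:ℝ) < C := lt_trans one_pos hC
  have hMC : C ≤ M := by linarith
  have hM0 : (0:ℝ) < M := by linarith
  have hM9 : 9 ≤ M^2 := by nlinarith
  set D : ℝ := 1 + ∑ j ∈ Finset.range r₀, Real.sqrt (p j) with hDdef
  have hD1 : 1 ≤ D := le_add_of_nonneg_right (Finset.sum_nonneg fun i _ => Real.sqrt_nonneg _)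
  have hsqD : ∀ j : ℕ, Real.sqrt (p j) ≤ D := by
    intro j
    rcases lt_or_ge j r₀ with h | h
    · have h1 : Real.sqrt (p j) ≤ ∑ i ∈ Finset.range r₀, Real.sqrt (p i) :=
        Finset.single_le_sum (fun i _ => Real.sqrt_nonneg _) (Finset.mem_range.2 h)
      linarith
    · have hlj : (0:ℝ) ≤ Real.log j := by
        rcases Nat.eq_zero_or_pos j with h0 | h0
        · simp [h0]
        · exact Real.log_natCast_nonneg j
      have h1 : p j ≤ 1 := by
        refine (hp j h).trans ?_
        rw [Real.exp_le_one_iff]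
        have : (0:ℝ) ≤ (j:ℝ) := Nat.cast_nonneg j
        nlinarith
      calc Real.sqrt (p j) ≤ Real.sqrt 1 := Real.sqrt_le_sqrt h1
        _ = 1 := Real.sqrt_one
        _ ≤ D := hD1
  -- the key eventual estimate
  have key : ∀ᶠ n : ℕ in atTop,
      Summable (fun r : ℕ => (C / ε n) ^ (r + 1) * Real.sqrt (p (r + 1))) ∧
      Real.exp (-((n : ℝ) * (ε n) ^ 2)) *
          ∑' r : ℕ, (C / ε n) ^ (r + 1) * Real.sqrt (p (r + 1))
        ≤ 2 * D * Real.exp (-6 * (n:ℝ)^((1:ℝ)/3)) := by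
    have hlog : ∀ᶠ n : ℕ in atTop, 1 ≤ Real.log n :=
      (Real.tendsto_log_atTop.comp tendsto_natCast_atTop_atTop).eventually_ge_atTop 1
    filter_upwards [aux14_loglin ((2*M/C)^3), aux14_loglin ((2*((r₀:ℝ)+3))^3), hlog,
      eventually_ge_atTop 1] with n h1 h2 hL1 hn1
    have hn1' : (1:ℝ) ≤ (n:ℝ) := by exact_mod_cast hn1
    have hn0 : (0:ℝ) ≤ (n:ℝ) := by linarith
    set t := (n:ℝ)^((1:ℝ)/3) with htdef
    set l := (Real.log n)^((1:ℝ)/3) with hldef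
    have hL0 : (0:ℝ) < Real.log n := by linarith
    have ht1 : 1 ≤ t := Real.one_le_rpow hn1' (by norm_num)
    have hl1 : 1 ≤ l := Real.one_le_rpow hL1 (by norm_num)
    have ht0 : (0:ℝ) < t := by linarith
    have hl0 : (0:ℝ) < l := by linarith
    have ht3 : t^3 = (n:ℝ) := by
      rw [htdef, ← Real.rpow_natCast ((n:ℝ)^((1:ℝ)/3)) 3, ← Real.rpow_mul hn0]
      norm_num
    have hl3 : l^3 = Real.log n := by
      rw [hldef, ← Real.rpow_natCast ((Real.log n)^((1:ℝ)/3)) 3, ← Real.rpow_mul hL0.le]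
      norm_num
    have hεn : ε n = M * l / t := hε n
    have hεpos : 0 < ε n := by rw [hεn]; positivity
    set a := C / ε n with hadef
    have haval : a = C * t / (M * l) := by
      rw [hadef, hεn, div_div_eq_mul_div]
    have ha0 : 0 < a := by rw [haval]; positivity
    have hKl1 : (2*M/C) * l ≤ t := aux14_cuberoot (by positivity) hL0.le hn0 h1
    have hKl2 : (2*((r₀:ℝ)+3)) * l ≤ t := aux14_cuberoot (by positivity) hL0.le hn0 h2
    have ha2 : 2 ≤ a := by
      rw [haval, le_div_iff₀ (by positivity)]
      have h3 : C * ((2*M/C)*l) ≤ C * t := mul_le_mul_of_nonneg_left hKl1 hC0.le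
      have h4 : C * ((2*M/C)*l) = 2*(M*l) := by field_simp
      linarith
    have ha1 : 1 ≤ a := by linarith
    have hat : a * l ≤ t := by
      rw [haval, div_mul_eq_mul_div, div_le_iff₀ (by positivity)]
      nlinarith [mul_le_mul_of_nonneg_right hMC (mul_pos ht0 hl0).le]
    have han : a ≤ (n:ℝ) := by
      have h5 : a ≤ t := by
        have := mul_le_mul_of_nonneg_left hl1 ha0.le
        linarith
      have h6 : t ≤ (n:ℝ) := by
        rw [htdef]
        calc (n:ℝ)^((1:ℝ)/3) ≤ (n:ℝ)^(1:ℝ) :=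
              Real.rpow_le_rpow_of_exponent_le hn1' (by norm_num)
          _ = (n:ℝ) := Real.rpow_one _
      linarith
    have hloga : Real.log a ≤ l^3 := by
      rw [hl3]; exact Real.log_le_log ha0 han
    have hloga0 : 0 ≤ Real.log a := Real.log_nonneg ha1
    set N := r₀ + 2 + ⌈a⌉₊ with hNdef
    have hNcast : (N:ℝ) ≤ (r₀:ℝ) + 3 + a := by
      have := Nat.ceil_lt_add_one ha0.le
      rw [hNdef]; push_cast; linarith
    have hNa : ∀ j : ℕ, N ≤ j → a ≤ (j:ℝ) := by
      intro j hj
      calc a ≤ (⌈a⌉₊ : ℝ) := Nat.le_ceil a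
        _ ≤ (j:ℝ) := by exact_mod_cast le_trans (Nat.le_add_left _ _) hj
    -- key term bound
    have hDaN1 : (1:ℝ) ≤ D * a^N * 2^N := by
      have e1 : (1:ℝ) ≤ a^N := one_le_pow₀ ha1
      have e2 : (1:ℝ) ≤ (2:ℝ)^N := one_le_pow₀ one_le_two
      calc (1:ℝ) = 1 * 1 * 1 := by norm_num
        _ ≤ D * a^N * 2^N :=
          mul_le_mul (mul_le_mul hD1 e1 zero_le_one (by linarith)) e2 zero_le_one
            (by positivity)
    have hterm : ∀ r : ℕ, a^(r+1) * Real.sqrt (p (r+1)) ≤ (D * a^N * 2^N) * (1/2:ℝ)^r := by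
      intro r
      rcases le_or_gt (r+1) N with h | h
      · have e1 : a^(r+1) ≤ a^N := pow_le_pow_right₀ ha1 h
        have e2 : Real.sqrt (p (r+1)) ≤ D := hsqD _
        have e3 : (1:ℝ) ≤ 2^N * (1/2:ℝ)^r := by
          have e4 : (2:ℝ)^r ≤ 2^N := pow_le_pow_right₀ one_le_two (by omega)
          calc (1:ℝ) = 2^r * (1/2:ℝ)^r := by rw [← mul_pow]; norm_num
            _ ≤ 2^N * (1/2:ℝ)^r := mul_le_mul_of_nonneg_right e4 (by positivity)
        calc a^(r+1) * Real.sqrt (p (r+1)) ≤ a^N * D :=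
              mul_le_mul e1 e2 (Real.sqrt_nonneg _) (pow_nonneg ha0.le _)
          _ = (D * a^N) * 1 := by ring
          _ ≤ (D * a^N) * (2^N * (1/2:ℝ)^r) :=
              mul_le_mul_of_nonneg_left e3 (by positivity)
          _ = (D * a^N * 2^N) * (1/2:ℝ)^r := by ring
      · have h2j : 2 ≤ r+1 := by omega
        have hrj : r₀ ≤ r+1 := by omega
        have haj : a ≤ ((r+1 : ℕ):ℝ) := hNa (r+1) (by omega)
        have h5 := aux14_tail a ha0.le (p (r+1)) (r+1) h2j (by exact_mod_cast haj)
          (hp (r+1) hrj)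
        calc a^(r+1) * Real.sqrt (p (r+1)) ≤ (1/2:ℝ)^(r+1) := h5
          _ ≤ (1/2:ℝ)^r := by
              rw [pow_succ]
              nlinarith [pow_nonneg (by norm_num : (0:ℝ) ≤ 1/2) r]
          _ = 1 * (1/2:ℝ)^r := (one_mul _).symm
          _ ≤ (D * a^N * 2^N) * (1/2:ℝ)^r :=
              mul_le_mul_of_nonneg_right hDaN1 (by positivity)
    have hgsum : Summable (fun r : ℕ => (D * a^N * 2^N) * (1/2:ℝ)^r) :=
      (summable_geometric_of_lt_one (by norm_num) (by norm_num)).mul_left _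
    have hnonneg : ∀ r : ℕ, 0 ≤ a^(r+1) * Real.sqrt (p (r+1)) :=
      fun r => mul_nonneg (pow_nonneg ha0.le _) (Real.sqrt_nonneg _)
    have hfsum : Summable (fun r : ℕ => a^(r+1) * Real.sqrt (p (r+1))) :=
      Summable.of_nonneg_of_le hnonneg hterm hgsum
    refine ⟨hfsum, ?_⟩
    have htsum : ∑' r : ℕ, a^(r+1) * Real.sqrt (p (r+1)) ≤ (D * a^N * 2^N) * 2 := by
      calc ∑' r : ℕ, a^(r+1) * Real.sqrt (p (r+1))
          ≤ ∑' r : ℕ, (D * a^N * 2^N) * (1/2:ℝ)^r := Summable.tsum_le_tsum hterm hfsum hgsum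
        _ = (D * a^N * 2^N) * (1-(1/2:ℝ))⁻¹ := by
            rw [tsum_mul_left, tsum_geometric_of_lt_one (by norm_num) (by norm_num)]
        _ = (D * a^N * 2^N) * 2 := by norm_num
    have hexpa : a^N = Real.exp ((N:ℝ) * Real.log a) := by
      rw [Real.exp_nat_mul, Real.exp_log ha0]
    have hexp2 : (2:ℝ)^N = Real.exp ((N:ℝ) * Real.log 2) := by
      rw [Real.exp_nat_mul, Real.exp_log two_pos]
    have hnε : (n:ℝ) * (ε n)^2 = M^2 * (t * l^2) := by
      rw [hεn, ← ht3]; field_simp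
    have hlog2 : Real.log 2 ≤ 1 := by
      have := Real.log_le_sub_one_of_pos (by norm_num : (0:ℝ) < 2); linarith
    have hN0 : (0:ℝ) ≤ (N:ℝ) := Nat.cast_nonneg N
    have hexpbound : -((n:ℝ) * (ε n)^2) + ((N:ℝ) * Real.log a + (N:ℝ) * Real.log 2)
        ≤ -6 * t := by
      have hl31 : 1 ≤ l^3 := one_le_pow₀ hl1
      have e1 : (N:ℝ) * Real.log a + (N:ℝ) * Real.log 2 ≤ (N:ℝ) * (2*l^3) := by
        have t1 : (N:ℝ) * Real.log a ≤ (N:ℝ) * l^3 := mul_le_mul_of_nonneg_left hloga hN0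
        have t2 : (N:ℝ) * Real.log 2 ≤ (N:ℝ) * l^3 :=
          mul_le_mul_of_nonneg_left (hlog2.trans hl31) hN0
        linarith
      have e2 : (N:ℝ) * (2*l^3) ≤ ((r₀:ℝ) + 3 + a) * (2*l^3) :=
        mul_le_mul_of_nonneg_right hNcast (by positivity)
      have e3 : ((r₀:ℝ) + 3) * (2*l^3) ≤ t*l^2 := by
        have t3 := mul_le_mul_of_nonneg_right hKl2 (sq_nonneg l)
        calc ((r₀:ℝ) + 3) * (2*l^3) = (2*((r₀:ℝ)+3)*l)*l^2 := by ring
          _ ≤ t*l^2 := t3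
      have e4 : a * (2*l^3) ≤ 2*(t*l^2) := by
        have t4 := mul_le_mul_of_nonneg_right hat (sq_nonneg l)
        calc a * (2*l^3) = 2*((a*l)*l^2) := by ring
          _ ≤ 2*(t*l^2) := by linarith
      have e5 : 9 * (t*l^2) ≤ M^2 * (t*l^2) :=
        mul_le_mul_of_nonneg_right hM9 (mul_nonneg ht0.le (sq_nonneg l))
      have e6 : 6 * t ≤ 6 * (t*l^2) := by
        have hl2 : 1 ≤ l^2 := one_le_pow₀ hl1
        have := mul_le_mul_of_nonneg_left hl2 ht0.le
        linarith
      have e7 : ((r₀:ℝ) + 3 + a) * (2*l^3)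
          = ((r₀:ℝ) + 3) * (2*l^3) + a * (2*l^3) := by ring
      rw [hnε]
      linarith
    calc Real.exp (-((n:ℝ) * (ε n)^2)) * ∑' r : ℕ, a^(r+1) * Real.sqrt (p (r+1))
        ≤ Real.exp (-((n:ℝ) * (ε n)^2)) * ((D * a^N * 2^N) * 2) :=
          mul_le_mul_of_nonneg_left htsum (Real.exp_nonneg _)
      _ = 2 * D * Real.exp (-((n:ℝ) * (ε n)^2)
            + ((N:ℝ) * Real.log a + (N:ℝ) * Real.log 2)) := by
          rw [Real.exp_add, Real.exp_add, ← hexpa, ← hexp2]; ring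
      _ ≤ 2 * D * Real.exp (-6 * t) :=
          mul_le_mul_of_nonneg_left (Real.exp_le_exp.2 hexpbound) (by linarith)
      _ = 2 * D * Real.exp (-6 * (n:ℝ)^((1:ℝ)/3)) := by rw [htdef]
  refine ⟨key.mono fun n h => h.1, ?_⟩
  have hg0 : Tendsto (fun n : ℕ => 2 * D * Real.exp (-6 * (n:ℝ)^((1:ℝ)/3))) atTop (nhds 0) := by
    have h1 : Tendsto (fun n : ℕ => (n:ℝ)^((1:ℝ)/3)) atTop atTop :=
      (tendsto_rpow_atTop (by norm_num)).comp tendsto_natCast_atTop_atTop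
    have h2 : Tendsto (fun n : ℕ => -6 * (n:ℝ)^((1:ℝ)/3)) atTop atBot := by
      have := h1.const_mul_atTop (by norm_num : (0:ℝ) < 6)
      have h3 := tendsto_neg_atTop_atBot.comp this
      refine h3.congr fun n => ?_
      simp [Function.comp]
    have h4 := Real.tendsto_exp_atBot.comp h2
    have h5 := h4.const_mul (2*D)
    simpa using h5
  refine squeeze_zero' (Eventually.of_forall fun n => ?_) (key.mono fun n h => h.2) hg0
  have hεnn : 0 ≤ ε n := by rw [hε n]; positivity
  exact mul_nonneg (Real.exp_nonneg _) (tsum_nonneg fun r =>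
    mul_nonneg (pow_nonneg (div_nonneg hC0.le hεnn) _) (Real.sqrt_nonneg _))

/-- If `C > 1` and `p_r ≤ exp(−4 r log r)` for all `r ≥ r₀`, then for all sufficiently
large `M`, setting `ε_n = M (log n)^{1/3} n^{−1/3}`, one has
`exp(−n ε_n²) · Σ_{r≥1} (C/ε_n)^r √(p_r) → 0`, the series being summable for every
sufficiently large `n`. -/
theorem stmt14 (C : ℝ) (hC : 1 < C) (r₀ : ℕ) (p : ℕ → ℝ) (hp0 : ∀ r, 0 ≤ p r)
    (hp : ∀ r : ℕ, r₀ ≤ r → p r ≤ Real.exp (-4 * (r : ℝ) * Real.log r)) :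
    ∃ M₀ > (0 : ℝ), ∀ M ≥ M₀,
      (∀ᶠ n : ℕ in atTop, Summable (fun r : ℕ =>
        (C / (M * (Real.log n) ^ ((1 : ℝ)/3) / (n : ℝ) ^ ((1 : ℝ)/3))) ^ (r + 1) *
          Real.sqrt (p (r + 1)))) ∧
      Tendsto (fun n : ℕ =>
          Real.exp (-((n : ℝ) *
            (M * (Real.log n) ^ ((1 : ℝ)/3) / (n : ℝ) ^ ((1 : ℝ)/3)) ^ 2)) *
          ∑' r : ℕ,
            (C / (M * (Real.log n) ^ ((1 : ℝ)/3) / (n : ℝ) ^ ((1 : ℝ)/3))) ^ (r + 1) *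
              Real.sqrt (p (r + 1)))
        atTop (nhds 0) := by
  refine ⟨C + 3, by linarith, fun M hM => ?_⟩
  exact aux14_main C hC r₀ p hp0 hp M hM
    (fun n => M * (Real.log n) ^ ((1 : ℝ)/3) / (n : ℝ) ^ ((1 : ℝ)/3)) (fun n => rfl)
end
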